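/- arXiv:1406.2738 — 10 statements merged into one kernel-verified Lean document; each statement's English description precedes it below -/
import Mathlib

section
/- Let N ∈ ℕ, let c ≥ 0 be real, let H be an N × N complex matrix, and let Q be an N × N Hermitian positive semidefinite complex matrix whose trace (a nonnegative real number) satisfies trace(Q) ≤ c. Then det(I + H Q Hᴴ) is a real number and det(I + H Q Hᴴ) ≤ ∏_{i=1}^{N} (1 + c · (H Hᴴ)_{ii}), where each diagonal entry (H Hᴴ)_{ii} is real and nonnegative. -/
open Matrix
open scoped ComplexOrder

-- diag entries of psd matrices are nonneg
lemma aux_psd_diag_nonneg {n : Type*} [Fintype n] [DecidableEq n]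
    {M : Matrix n n ℂ} (hM : M.PosSemidef) (i : n) : 0 ≤ M i i := by
  exact hM.diag_nonneg

-- trace = sum of eigenvalues for Hermitian matrices
lemma aux_trace_eq_sum_eigenvalues {n : Type*} [Fintype n] [DecidableEq n]
    {M : Matrix n n ℂ} (hM : M.IsHermitian) :
    M.trace = ∑ i, (hM.eigenvalues i : ℂ) := by
  exact hM.trace_eq_sum_eigenvalues

-- AM-GM consequence
lemma aux_prod_le_one {n : ℕ} (hn : 0 < n) (z : Fin n → ℝ) (hz : ∀ i, 0 ≤ z i)
    (hsum : ∑ i, z i ≤ n) : ∏ i, z i ≤ 1 := by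
  have hn' : (0:ℝ) < n := by exact_mod_cast hn
  have h := Real.geom_mean_le_arith_mean (Finset.univ) (fun _ => (1:ℝ)) z
    (fun _ _ => zero_le_one) (by simpa using hn') (fun i _ => hz i)
  simp only [Real.rpow_one, Finset.sum_const, Finset.card_univ, Fintype.card_fin,
    nsmul_eq_mul, mul_one, one_mul] at h
  have hP : (0:ℝ) ≤ ∏ i, z i := Finset.prod_nonneg fun i _ => hz i
  have h1 : (∏ i, z i) ^ ((n:ℝ)⁻¹) ≤ 1 := by
    refine h.trans ?_
    rw [div_le_one hn']
    exact hsum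
  have h2 : (∏ i, z i) = ((∏ i, z i) ^ ((n:ℝ)⁻¹)) ^ (n:ℝ) := by
    rw [← Real.rpow_mul hP, inv_mul_cancel₀ (ne_of_gt hn'), Real.rpow_one]
  rw [h2]
  exact Real.rpow_le_one (Real.rpow_nonneg hP _) h1 (le_of_lt hn')

-- Hadamard's inequality for positive definite matrices
lemma aux_hadamard {n : ℕ} {M : Matrix (Fin n) (Fin n) ℂ} (hM : M.PosDef) :
    M.det.re ≤ ∏ i, (M i i).re := by
  rcases Nat.eq_zero_or_pos n with hn | hn
  · subst hn; simp [Matrix.det_fin_zero]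
  -- diagonal entries
  set d : Fin n → ℝ := fun i => (M i i).re with hd_def
  have hdiag : ∀ i, M i i = (d i : ℂ) := fun i =>
    (hM.isHermitian.coe_re_apply_self i).symm
  have hdpos : ∀ i, 0 < d i := by
    intro i
    have h2 : (0:ℂ) < M i i := hM.diag_pos
    exact (Complex.lt_def.mp h2).1
  set e : Fin n → ℝ := fun i => Real.sqrt (d i) with he_def
  have hepos : ∀ i, 0 < e i := fun i => Real.sqrt_pos.mpr (hdpos i)
  set D : Matrix (Fin n) (Fin n) ℂ := diagonal (fun i => ((e i)⁻¹ : ℂ)) with hD_def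
  have hDH : Dᴴ = D := by
    rw [hD_def, diagonal_conjTranspose]
    have : star (fun i => ((e i : ℂ))⁻¹) = fun i => ((e i : ℂ))⁻¹ := by
      funext i
      simp [Complex.conj_ofReal]
    rw [this]
  set B : Matrix (Fin n) (Fin n) ℂ := Dᴴ * M * D with hB_def
  have hB : B.PosSemidef := hM.posSemidef.conjTranspose_mul_mul_same D
  have hBdiag : ∀ i, B i i = 1 := by
    intro i
    rw [hB_def, hDH, hD_def]
    rw [mul_diagonal, diagonal_mul, hdiag i]
    have : (e i : ℂ) ≠ 0 := by exact_mod_cast (hepos i).ne'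
    field_simp
    rw [← Complex.ofReal_pow]; simp only [he_def, Real.sq_sqrt (hdpos i).le]
  -- eigenvalues of B
  set μ : Fin n → ℝ := hB.1.eigenvalues with hμ_def
  have hμnonneg : ∀ i, 0 ≤ μ i := hB.eigenvalues_nonneg
  have htraceB : B.trace = (n : ℂ) := by
    have h0 : B.trace = ∑ i : Fin n, B i i := rfl
    rw [h0, Finset.sum_congr rfl fun i _ => hBdiag i]
    simp
  have hsum : ∑ i, μ i = n := by
    have h := aux_trace_eq_sum_eigenvalues hB.1
    rw [htraceB] at h
    exact_mod_cast h.symm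
  have hdetB : B.det = ((∏ i, μ i : ℝ) : ℂ) := by
    rw [hB.1.det_eq_prod_eigenvalues]
    push_cast
    rfl
  have hprodμ : ∏ i, μ i ≤ 1 := aux_prod_le_one hn μ hμnonneg (le_of_eq hsum)
  -- relate det M and det B
  have hdetD : D.det = ((∏ i, e i : ℝ) : ℂ)⁻¹ := by
    rw [hD_def, det_diagonal]
    push_cast
    rw [← Finset.prod_inv_distrib]
  have hdetM : M.det = B.det * ((∏ i, d i : ℝ) : ℂ) := by
    have hs : ((∏ i, e i : ℝ) : ℂ) ≠ 0 := by
      exact_mod_cast (Finset.prod_pos fun i _ => hepos i).ne'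
    have hB2 : B.det = D.det * M.det * D.det := by
      rw [hB_def, det_mul, det_mul, hDH]
    have hee : ((∏ i, e i : ℝ) : ℂ) * ((∏ i, e i : ℝ) : ℂ) = ((∏ i, d i : ℝ) : ℂ) := by
      rw [← Complex.ofReal_mul, ← Finset.prod_mul_distrib]
      norm_cast
      exact Finset.prod_congr rfl fun i _ => Real.mul_self_sqrt (hdpos i).le
    rw [hB2, hdetD, ← hee]
    field_simp
  rw [hdetM, hdetB, ← Complex.ofReal_mul, Complex.ofReal_re]
  calc (∏ i, μ i) * (∏ i, d i) ≤ 1 * (∏ i, d i) := by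
        exact mul_le_mul_of_nonneg_right hprodμ (Finset.prod_nonneg fun i _ => (hdpos i).le)
    _ = ∏ i, d i := one_mul _

lemma aux_selfmul {N M : ℕ} (C : Matrix (Fin N) (Fin M) ℂ) (i : Fin N) :
    (C * Cᴴ) i i = ((∑ k, Complex.normSq (C i k) : ℝ) : ℂ) := by
  rw [Matrix.mul_apply]
  push_cast
  refine Finset.sum_congr rfl fun k _ => ?_
  rw [conjTranspose_apply, Complex.star_def, Complex.mul_conj]

lemma aux_key {N : ℕ} (H Q : Matrix (Fin N) (Fin N) ℂ) (hQ : Q.PosSemidef) (i : Fin N) :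
    ((H * Q * Hᴴ) i i).re ≤ (Q.trace).re * ((H * Hᴴ) i i).re := by
  open scoped MatrixOrder Matrix.Norms.L2Operator in
  obtain ⟨B, hB⟩ := CStarAlgebra.nonneg_iff_eq_star_mul_self.mp hQ.nonneg
  obtain rfl : Q = Bᴴ * B := hB
  set C : Matrix (Fin N) (Fin N) ℂ := H * Bᴴ with hC_def
  have hfact : H * (Bᴴ * B) * Hᴴ = C * Cᴴ := by
    rw [hC_def, conjTranspose_mul, conjTranspose_conjTranspose]
    noncomm_ring
  rw [hfact, aux_selfmul C i, Complex.ofReal_re]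
  have hH : ((H * Hᴴ) i i).re = ∑ j, Complex.normSq (H i j) := by
    rw [aux_selfmul H i, Complex.ofReal_re]
  have htr : ((Bᴴ * B).trace).re = ∑ k, ∑ j, Complex.normSq (B k j) := by
    have h0 : (Bᴴ * B).trace = ∑ j, (Bᴴ * (Bᴴ)ᴴ) j j := by
      rw [conjTranspose_conjTranspose]; rfl
    rw [h0]
    rw [Finset.sum_congr rfl fun j _ => aux_selfmul Bᴴ j, ← Complex.ofReal_sum,
      Complex.ofReal_re, Finset.sum_comm]
    refine Finset.sum_congr rfl fun k _ => Finset.sum_congr rfl fun j _ => ?_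
    rw [conjTranspose_apply, Complex.star_def, Complex.normSq_conj]
  rw [hH, htr]
  -- Cauchy-Schwarz per row of C
  have hCS : ∀ k, Complex.normSq (C i k) ≤
      (∑ j, Complex.normSq (H i j)) * (∑ j, Complex.normSq (B k j)) := by
    intro k
    have h1 : ‖C i k‖ ≤ ∑ j, ‖H i j‖ * ‖B k j‖ := by
      rw [hC_def, Matrix.mul_apply]
      refine (norm_sum_le _ _).trans ?_
      refine le_of_eq (Finset.sum_congr rfl fun j _ => ?_)
      rw [norm_mul, conjTranspose_apply, Complex.star_def, Complex.norm_conj]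
    have h2 : (∑ j, ‖H i j‖ * ‖B k j‖) ^ 2 ≤
        (∑ j, ‖H i j‖ ^ 2) * (∑ j, ‖B k j‖ ^ 2) :=
      Finset.sum_mul_sq_le_sq_mul_sq _ _ _
    calc Complex.normSq (C i k) = ‖C i k‖ ^ 2 := (Complex.sq_norm _).symm
      _ ≤ (∑ j, ‖H i j‖ * ‖B k j‖) ^ 2 := by
          exact pow_le_pow_left₀ (norm_nonneg _) h1 2
      _ ≤ (∑ j, ‖H i j‖ ^ 2) * (∑ j, ‖B k j‖ ^ 2) := h2
      _ = (∑ j, Complex.normSq (H i j)) * (∑ j, Complex.normSq (B k j)) := by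
          simp [Complex.sq_norm]
  calc ∑ k, Complex.normSq (C i k)
      ≤ ∑ k, (∑ j, Complex.normSq (H i j)) * (∑ j, Complex.normSq (B k j)) :=
        Finset.sum_le_sum fun k _ => hCS k
    _ = _ := by rw [← Finset.mul_sum, mul_comm]

/-- Hadamard-type bound: for a complex `N × N` matrix `H` and a Hermitian positive
semidefinite `Q` with `trace Q ≤ c`, `det (I + H Q Hᴴ)` is real and bounded by
`∏ i (1 + c * (H Hᴴ)_{ii})`, where the diagonal entries of `H Hᴴ` are real and
nonnegative. -/
theorem det_one_add_conj_le_prod_diag (N : ℕ) (c : ℝ) (hc : 0 ≤ c)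
    (H Q : Matrix (Fin N) (Fin N) ℂ) (hQ : Q.PosSemidef)
    (htr : (Matrix.trace Q).re ≤ c) :
    ((1 + H * Q * Hᴴ).det).im = 0 ∧
    (∀ i : Fin N, ((H * Hᴴ) i i).im = 0 ∧ 0 ≤ ((H * Hᴴ) i i).re) ∧
    ((1 + H * Q * Hᴴ).det).re ≤ ∏ i : Fin N, (1 + c * ((H * Hᴴ) i i).re) := by
  have hA : (H * Q * Hᴴ).PosSemidef := hQ.mul_mul_conjTranspose_same H
  have hM : (1 + H * Q * Hᴴ).PosDef := Matrix.PosDef.one.add_posSemidef hA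
  have hHH : (H * Hᴴ).PosSemidef := posSemidef_self_mul_conjTranspose H
  have hdiagHH : ∀ i : Fin N, ((H * Hᴴ) i i).im = 0 ∧ 0 ≤ ((H * Hᴴ) i i).re := by
    intro i
    have h := aux_psd_diag_nonneg hHH i
    rw [Complex.le_def] at h
    exact ⟨h.2.symm, by simpa using h.1⟩
  have hdet : (1 + H * Q * Hᴴ).det = ((∏ i, hM.isHermitian.eigenvalues i : ℝ) : ℂ) := by
    rw [hM.isHermitian.det_eq_prod_eigenvalues]
    push_cast
    rfl
  refine ⟨by rw [hdet, Complex.ofReal_im], hdiagHH, ?_⟩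
  have hAdiag : ∀ i : Fin N, 0 ≤ ((H * Q * Hᴴ) i i).re := by
    intro i
    have h := (Complex.le_def.mp (aux_psd_diag_nonneg hA i)).1
    simpa using h
  calc ((1 + H * Q * Hᴴ).det).re
      ≤ ∏ i, ((1 + H * Q * Hᴴ) i i).re := aux_hadamard hM
    _ = ∏ i, (1 + ((H * Q * Hᴴ) i i).re) := by
        refine Finset.prod_congr rfl fun i _ => ?_
        rw [Matrix.add_apply, Matrix.one_apply_eq, Complex.add_re, Complex.one_re]
    _ ≤ ∏ i, (1 + c * ((H * Hᴴ) i i).re) := by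
        refine Finset.prod_le_prod (fun i _ => by have := hAdiag i; linarith) (fun i _ => ?_)
        have h1 : ((H * Q * Hᴴ) i i).re ≤ (Q.trace).re * ((H * Hᴴ) i i).re :=
          aux_key H Q hQ i
        have h2 : (Q.trace).re * ((H * Hᴴ) i i).re ≤ c * ((H * Hᴴ) i i).re :=
          mul_le_mul_of_nonneg_right htr (hdiagHH i).2
        linarith
end

section
/- Let N ∈ ℕ and let M be an N × N Hermitian positive semidefinite complex matrix. Then det(I + M) is a real number, each diagonal entry M_{ii} is real and nonnegative, and det(I + M) ≤ ∏_{i=1}^{N} (1 + M_{ii}). -/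
open Matrix
open scoped ComplexOrder

-- AM-GM helper
private lemma amgm_aux {ι : Type*} [Fintype ι] (μ : ι → ℝ) (h0 : ∀ i, 0 ≤ μ i)
    (hs : ∑ i, μ i = (Fintype.card ι : ℝ)) : ∏ i, μ i ≤ 1 := by
  rcases Nat.eq_zero_or_pos (Fintype.card ι) with hc | hc
  · have : IsEmpty ι := Fintype.card_eq_zero_iff.mp hc
    simp
  · have hn0 : (Fintype.card ι : ℝ) ≠ 0 := Nat.cast_ne_zero.mpr hc.ne'
    have hw' : ∑ _i : ι, (Fintype.card ι : ℝ)⁻¹ = 1 := by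
      rw [Finset.sum_const, Finset.card_univ, nsmul_eq_mul, mul_inv_cancel₀ hn0]
    have key := Real.geom_mean_le_arith_mean_weighted Finset.univ
      (fun _ => (Fintype.card ι : ℝ)⁻¹) μ (fun i _ => by positivity) hw' (fun i _ => h0 i)
    have hsum : ∑ i, (Fintype.card ι : ℝ)⁻¹ * μ i = 1 := by
      rw [← Finset.mul_sum, hs, inv_mul_cancel₀ hn0]
    have hP0 : 0 ≤ ∏ i, μ i ^ ((Fintype.card ι : ℝ)⁻¹) :=
      Finset.prod_nonneg fun i _ => Real.rpow_nonneg (h0 i) _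
    have hP1 : ∏ i, μ i ^ ((Fintype.card ι : ℝ)⁻¹) ≤ 1 := key.trans_eq hsum
    have h1 : (∏ i, μ i ^ ((Fintype.card ι : ℝ)⁻¹)) ^ (Fintype.card ι) = ∏ i, μ i := by
      rw [← Finset.prod_pow]
      refine Finset.prod_congr rfl fun i _ => ?_
      rw [← Real.rpow_natCast (μ i ^ ((Fintype.card ι : ℝ)⁻¹)) (Fintype.card ι),
        ← Real.rpow_mul (h0 i), inv_mul_cancel₀ hn0, Real.rpow_one]
    calc ∏ i, μ i = (∏ i, μ i ^ ((Fintype.card ι : ℝ)⁻¹)) ^ (Fintype.card ι) := h1.symm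
      _ ≤ 1 := pow_le_one₀ hP0 hP1

private lemma trace_eq_sum_eigenvalues_aux {n : Type*} [Fintype n] [DecidableEq n]
    {B : Matrix n n ℂ} (hB : B.IsHermitian) :
    B.trace = ((∑ i, hB.eigenvalues i : ℝ) : ℂ) := by
  conv_lhs => rw [hB.spectral_theorem, Unitary.conjStarAlgAut_apply]
  rw [trace_mul_cycle]
  rw [show (star (hB.eigenvectorUnitary : Matrix n n ℂ)) * (hB.eigenvectorUnitary : Matrix n n ℂ)
      = 1 from Unitary.coe_star_mul_self hB.eigenvectorUnitary]
  rw [Matrix.one_mul, trace_diagonal]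
  push_cast
  rfl

/-- Hadamard-type inequality: for a Hermitian positive semidefinite complex matrix `M`,
`det (I + M)` is real, the diagonal entries `M_{ii}` are real and nonnegative, and
`det (I + M) ≤ ∏ i (1 + M_{ii})`. -/
theorem det_one_add_posSemidef_le_prod_one_add_diag (N : ℕ)
    (M : Matrix (Fin N) (Fin N) ℂ) (hM : M.PosSemidef) :
    ((1 + M).det).im = 0 ∧
    (∀ i : Fin N, (M i i).im = 0 ∧ 0 ≤ (M i i).re) ∧
    ((1 + M).det).re ≤ ∏ i : Fin N, (1 + (M i i).re) := by
  have hA : (1 + M).PosDef := Matrix.PosDef.one.add_posSemidef hM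
  have hH : (1 + M).IsHermitian := hA.isHermitian
  -- diagonal entries
  have hdiag : ∀ i : Fin N, (M i i).im = 0 ∧ 0 ≤ (M i i).re := by
    intro i
    have h := hM.dotProduct_mulVec_nonneg (Pi.single i 1)
    have he : (star (Pi.single i 1) ⬝ᵥ M *ᵥ Pi.single i (1 : ℂ)) = M i i := by
      simp [dotProduct, mulVec, Pi.single_apply]
    rw [he, Complex.le_def] at h
    exact ⟨h.2.symm, by simpa using h.1⟩
  -- real quantities
  set d : Fin N → ℝ := fun i => 1 + (M i i).re with hd_def
  have hd : ∀ i, 0 < d i := fun i => by have := (hdiag i).2; simp [hd_def]; linarith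
  have hAii : ∀ i, (1 + M) i i = ((d i : ℝ) : ℂ) := by
    intro i
    apply Complex.ext
    · simp [Matrix.add_apply, Matrix.one_apply_eq, hd_def]
    · simp [Matrix.add_apply, Matrix.one_apply_eq, (hdiag i).1]
  set r : ℝ := ∏ i, hH.eigenvalues i with hr_def
  have hdetA : (1 + M).det = ((r : ℝ) : ℂ) := by
    rw [hH.det_eq_prod_eigenvalues, hr_def]
    push_cast
    rfl
  refine ⟨by rw [hdetA]; simp, hdiag, ?_⟩
  -- the congruence matrix
  set f : Fin N → ℝ := fun i => (Real.sqrt (d i))⁻¹ with hf_def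
  set D : Matrix (Fin N) (Fin N) ℂ := Matrix.diagonal (fun i => ((f i : ℝ) : ℂ)) with hD_def
  have hDH : Dᴴ = D := by
    ext i j
    rw [Matrix.conjTranspose_apply]
    by_cases h : j = i
    · subst h
      simp [hD_def, Matrix.diagonal_apply_eq, Complex.conj_ofReal]
    · rw [hD_def, Matrix.diagonal_apply_ne _ h, Matrix.diagonal_apply_ne _ (Ne.symm h),
        star_zero]
  have hB : (D * (1 + M) * D).PosSemidef := by
    have := hA.posSemidef.conjTranspose_mul_mul_same D
    rwa [hDH] at this
  set B := D * (1 + M) * D with hB_def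
  have hBii : ∀ i, B i i = 1 := by
    intro i
    have hs : Real.sqrt (d i) ≠ 0 := (Real.sqrt_pos.mpr (hd i)).ne'
    have h1 : Real.sqrt (d i) * Real.sqrt (d i) = d i := Real.mul_self_sqrt (hd i).le
    have hfd : f i * d i * f i = 1 := by
      rw [hf_def, ← h1]; field_simp
    rw [hB_def, Matrix.mul_diagonal, Matrix.diagonal_mul, hAii i]
    have hcast : (↑(f i) * ↑(d i) * ↑(f i) : ℂ) = ((f i * d i * f i : ℝ) : ℂ) := by
      push_cast; ring
    rw [hcast, hfd]
    simp
  have htr : B.trace = (N : ℂ) := by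
    rw [Matrix.trace]
    simp only [Matrix.diag_apply, hBii]
    simp
  have hμsum : ∑ i, hB.isHermitian.eigenvalues i = (N : ℝ) := by
    have := trace_eq_sum_eigenvalues_aux hB.isHermitian
    rw [htr] at this
    exact_mod_cast this.symm
  have hμprod : ∏ i, hB.isHermitian.eigenvalues i ≤ 1 := by
    apply amgm_aux _ (fun i => hB.eigenvalues_nonneg i)
    simpa using hμsum
  -- compute det B
  have hdetD : D.det = ((∏ i, f i : ℝ) : ℂ) := by
    rw [hD_def, Matrix.det_diagonal]
    push_cast
    rfl
  have hdetB : B.det = (((∏ i, f i) * r * (∏ i, f i) : ℝ) : ℂ) := by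
    rw [hB_def, Matrix.det_mul, Matrix.det_mul, hdetD, hdetA]
    push_cast
    ring
  have hdetB' : B.det = ((∏ i, hB.isHermitian.eigenvalues i : ℝ) : ℂ) := by
    rw [hB.isHermitian.det_eq_prod_eigenvalues]
    push_cast
    rfl
  have hreal : (∏ i, f i) * r * (∏ i, f i) = ∏ i, hB.isHermitian.eigenvalues i := by
    have := hdetB.symm.trans hdetB'
    exact_mod_cast this
  have hf2 : (∏ i, f i) * (∏ i, f i) = (∏ i, d i)⁻¹ := by
    rw [← Finset.prod_mul_distrib, ← Finset.prod_inv_distrib]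
    refine Finset.prod_congr rfl fun i _ => ?_
    rw [hf_def, ← mul_inv, Real.mul_self_sqrt (hd i).le]
  have hdpos : 0 < ∏ i, d i := Finset.prod_pos fun i _ => hd i
  have hkey : r / ∏ i, d i ≤ 1 := by
    have : r * ((∏ i, f i) * (∏ i, f i)) ≤ 1 := by
      calc r * ((∏ i, f i) * (∏ i, f i)) = (∏ i, f i) * r * (∏ i, f i) := by ring
        _ = ∏ i, hB.isHermitian.eigenvalues i := hreal
        _ ≤ 1 := hμprod
    rwa [hf2, ← div_eq_mul_inv] at this
  have : r ≤ ∏ i, d i := (div_le_one hdpos).mp hkey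
  rw [hdetA]
  simpa [hd_def] using this
end

section
/- Let N ∈ ℕ, let c ≥ 0 be real, let H be an N × N complex matrix, and let Q be an N × N Hermitian positive semidefinite complex matrix whose trace satisfies trace(Q) ≤ c. Then det(I + H Q Hᴴ) and det(I + c · H Hᴴ) are real numbers and det(I + H Q Hᴴ) ≤ det(I + c · H Hᴴ). -/
open Matrix
open scoped ComplexOrder

lemma aux_im_det_eq_zero {N : ℕ} {A : Matrix (Fin N) (Fin N) ℂ} (hA : A.IsHermitian) :
    A.det.im = 0 := by
  have h := A.det_conjTranspose
  rw [hA.eq] at h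
  exact Complex.conj_eq_iff_im.mp h.symm

lemma aux_one_le_det_one_add {N : ℕ} {C : Matrix (Fin N) (Fin N) ℂ} (hC : C.PosSemidef) :
    (1 : ℂ) ≤ (1 + C).det := by
  have hM : (1 + C).IsHermitian := isHermitian_one.add hC.1
  have hev : ∀ i, (1 : ℝ) ≤ hM.eigenvalues i := by
    intro i
    set v : Fin N → ℂ := ⇑(hM.eigenvectorBasis i) with hv
    have hvne : v ≠ 0 := by
      intro h0
      apply hM.eigenvectorBasis.orthonormal.ne_zero i
      ext j
      exact congrFun h0 j
    have hmv : (1 + C) *ᵥ v = hM.eigenvalues i • v := hM.mulVec_eigenvectorBasis i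
    have ht : 0 < dotProduct (star v) v := dotProduct_star_self_pos_iff.mpr hvne
    have hz : 0 ≤ dotProduct (star v) (C *ᵥ v) := hC.dotProduct_mulVec_nonneg v
    have key : (hM.eigenvalues i : ℝ) • dotProduct (star v) v
        = dotProduct (star v) v + dotProduct (star v) (C *ᵥ v) := by
      have := congrArg (dotProduct (star v)) hmv
      rw [add_mulVec, one_mulVec, dotProduct_add, dotProduct_smul] at this
      exact this.symm
    have htre : 0 < (dotProduct (star v) v).re := (Complex.lt_def.mp ht).1
    have hzre : 0 ≤ (dotProduct (star v) (C *ᵥ v)).re := (Complex.le_def.mp hz).1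
    have keyre := congrArg Complex.re key
    rw [Complex.add_re, Complex.real_smul, Complex.mul_re, Complex.ofReal_re,
      Complex.ofReal_im, zero_mul, sub_zero] at keyre
    nlinarith
  rw [hM.det_eq_prod_eigenvalues]
  have : ((1 : ℝ) : ℂ) ≤ ((∏ i, hM.eigenvalues i : ℝ) : ℂ) := by
    rw [Complex.real_le_real]
    calc (1 : ℝ) = ∏ _i : Fin N, (1 : ℝ) := by simp
    _ ≤ ∏ i, hM.eigenvalues i :=
      Finset.prod_le_prod (fun i _ => zero_le_one) (fun i _ => hev i)
  simpa [Complex.ofReal_prod] using this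

open scoped MatrixOrder in
lemma aux_det_le_det_add {N : ℕ} {A D : Matrix (Fin N) (Fin N) ℂ}
    (hA : A.PosDef) (hD : D.PosSemidef) : A.det ≤ (A + D).det := by
  set S := CFC.sqrt A with hSdef
  have hS : S.PosSemidef := Matrix.nonneg_iff_posSemidef.mp (CFC.sqrt_nonneg A)
  have hSS : S * S = A := CFC.sqrt_mul_sqrt_self A (Matrix.nonneg_iff_posSemidef.mpr hA.posSemidef)
  have hdet : S.det * S.det = A.det := by rw [← det_mul, hSS]
  have hdA : 0 < A.det := hA.det_pos
  have hSu : IsUnit S.det := by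
    refine isUnit_iff_ne_zero.mpr fun h => ?_
    rw [h, mul_zero] at hdet
    exact hdA.ne' hdet.symm
  have hSinv : S * S⁻¹ = 1 := mul_nonsing_inv S hSu
  have hSinv' : S⁻¹ * S = 1 := nonsing_inv_mul S hSu
  have hCps : (S⁻¹ * D * S⁻¹).PosSemidef := by
    have := hD.mul_mul_conjTranspose_same S⁻¹
    rwa [hS.1.inv.eq] at this
  have hkey : A + D = S * (1 + S⁻¹ * D * S⁻¹) * S := by
    rw [Matrix.mul_add, Matrix.add_mul, Matrix.mul_one, hSS]
    congr 1
    calc D = (S * S⁻¹) * D * (S⁻¹ * S) := by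
          rw [hSinv, hSinv', Matrix.one_mul, Matrix.mul_one]
    _ = S * (S⁻¹ * D * S⁻¹) * S := by simp only [Matrix.mul_assoc]
  rw [hkey, det_mul, det_mul]
  have h2 : S.det * (1 + S⁻¹ * D * S⁻¹).det * S.det
      = A.det * (1 + S⁻¹ * D * S⁻¹).det := by rw [← hdet]; ring
  rw [h2]
  exact le_mul_of_one_le_right hdA.le (aux_one_le_det_one_add hCps)

lemma aux_smul_one_sub_psd {N : ℕ} {c : ℝ} {Q : Matrix (Fin N) (Fin N) ℂ}
    (hQ : Q.PosSemidef) (htr : (Matrix.trace Q).re ≤ c) :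
    ((c : ℂ) • (1 : Matrix (Fin N) (Fin N) ℂ) - Q).PosSemidef := by
  have hH := hQ.1
  set U : Matrix (Fin N) (Fin N) ℂ := (hH.eigenvectorUnitary : Matrix (Fin N) (Fin N) ℂ) with hU
  have hUU : U * star U = 1 := Matrix.mem_unitaryGroup_iff.mp hH.eigenvectorUnitary.2
  have hUU' : star U * U = 1 := Matrix.mem_unitaryGroup_iff'.mp hH.eigenvectorUnitary.2
  have htrQ : Matrix.trace Q = ∑ i, (hH.eigenvalues i : ℂ) := by
    conv_lhs => rw [hH.spectral_theorem, Unitary.conjStarAlgAut_apply]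
    rw [Matrix.trace_mul_cycle, ← hU, hUU', one_mul, Matrix.trace_diagonal]
    rfl
  have hsum : ∑ i, hH.eigenvalues i ≤ c := by
    have : (Matrix.trace Q).re = ∑ i, hH.eigenvalues i := by
      rw [htrQ, Complex.re_sum]
      simp
    linarith [htr, this.symm.le]
  have hev : ∀ i, hH.eigenvalues i ≤ c := by
    intro i
    have h1 : hH.eigenvalues i ≤ ∑ j, hH.eigenvalues j :=
      Finset.single_le_sum (fun j _ => hQ.eigenvalues_nonneg j) (Finset.mem_univ i)
    linarith
  have hdiag : (Matrix.diagonal (fun i => ((c - hH.eigenvalues i : ℝ) : ℂ))).PosSemidef := by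
    refine posSemidef_diagonal_iff.mpr fun i => ?_
    rw [← Complex.ofReal_zero, Complex.real_le_real]
    linarith [hev i]
  have hconj := hdiag.mul_mul_conjTranspose_same U
  have heq : (c : ℂ) • (1 : Matrix (Fin N) (Fin N) ℂ) - Q
      = U * Matrix.diagonal (fun i => ((c - hH.eigenvalues i : ℝ) : ℂ)) * Uᴴ := by
    have hdd : Matrix.diagonal (fun i => ((c - hH.eigenvalues i : ℝ) : ℂ))
        = (c : ℂ) • (1 : Matrix (Fin N) (Fin N) ℂ)
          - Matrix.diagonal (RCLike.ofReal ∘ hH.eigenvalues) := by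
      ext i j
      by_cases h : i = j
      · subst h
        simp only [Matrix.diagonal_apply_eq, Matrix.sub_apply, Matrix.smul_apply,
          Matrix.one_apply_eq, Function.comp_apply, smul_eq_mul, mul_one]
        show (↑(c - hH.eigenvalues i) : ℂ) = ↑c - Complex.ofReal (hH.eigenvalues i)
        push_cast
        ring
      · simp [Matrix.diagonal_apply_ne _ h, Matrix.one_apply_ne h]
    rw [hdd, Matrix.mul_sub, Matrix.sub_mul]
    congr 1
    · rw [Matrix.mul_smul, Matrix.mul_one, Matrix.smul_mul, ← Matrix.star_eq_conjTranspose, hUU]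
    · rw [← Matrix.star_eq_conjTranspose, hU]
      exact hH.spectral_theorem
  rw [heq]
  exact hconj

/-- For a complex `N × N` matrix `H` and a Hermitian positive semidefinite `Q` with
`trace Q ≤ c`, both `det (I + H Q Hᴴ)` and `det (I + c · H Hᴴ)` are real, and
`det (I + H Q Hᴴ) ≤ det (I + c · H Hᴴ)`. -/
theorem det_one_add_conj_le_det_one_add_smul (N : ℕ) (c : ℝ) (hc : 0 ≤ c)
    (H Q : Matrix (Fin N) (Fin N) ℂ) (hQ : Q.PosSemidef)
    (htr : (Matrix.trace Q).re ≤ c) :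
    ((1 + H * Q * Hᴴ).det).im = 0 ∧
    ((1 + (c : ℂ) • (H * Hᴴ)).det).im = 0 ∧
    ((1 + H * Q * Hᴴ).det).re ≤ ((1 + (c : ℂ) • (H * Hᴴ)).det).re := by
  have hHQH : (H * Q * Hᴴ).PosSemidef := hQ.mul_mul_conjTranspose_same H
  have hA : (1 + H * Q * Hᴴ).PosDef := Matrix.PosDef.one.add_posSemidef hHQH
  have hR : ((c : ℂ) • (1 : Matrix (Fin N) (Fin N) ℂ) - Q).PosSemidef :=
    aux_smul_one_sub_psd hQ htr
  have hD : (H * ((c : ℂ) • (1 : Matrix (Fin N) (Fin N) ℂ) - Q) * Hᴴ).PosSemidef :=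
    hR.mul_mul_conjTranspose_same H
  have hkey : 1 + (c : ℂ) • (H * Hᴴ)
      = (1 + H * Q * Hᴴ) + H * ((c : ℂ) • (1 : Matrix (Fin N) (Fin N) ℂ) - Q) * Hᴴ := by
    rw [Matrix.mul_sub, Matrix.sub_mul, Matrix.mul_smul, Matrix.mul_one, Matrix.smul_mul]
    abel
  have hle : (1 + H * Q * Hᴴ).det ≤ (1 + (c : ℂ) • (H * Hᴴ)).det := by
    rw [hkey]
    exact aux_det_le_det_add hA hD
  have hB : (1 + (c : ℂ) • (H * Hᴴ)).PosDef := by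
    rw [hkey]; exact hA.add_posSemidef hD
  exact ⟨aux_im_det_eq_zero hA.isHermitian, aux_im_det_eq_zero hB.isHermitian,
    (Complex.le_def.mp hle).1⟩
end

section
/- Fix real numbers α > 2, P > 0 and κ > 0, and let Ψ : ℕ → ℕ satisfy 1 ≤ Ψ(n) ≤ n^{α/2 − 2 − κ} for all n ≥ 2. Define, for n ≥ 2, C_s(n) = ∑_{i=1}^{⌊ln(√n/2)⌋} (n / e^i) · ln(1 + P · 2^α · n^{2 − α/2} · Ψ(n) · e^{iα}). Then C_s(n) = O(n^{1/2 + 2/α} · Ψ(n)^{1/α} · ln n) as n → ∞, i.e., there exist a constant K > 0 and N₀ ∈ ℕ such that C_s(n) ≤ K · n^{1/2 + 2/α} · Ψ(n)^{1/α} · ln n for all n ≥ N₀. -/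
open Finset

open scoped NNReal

lemma one_add_rpow_le (t p : ℝ) (ht : 0 ≤ t) (hp : 1 ≤ p) : 1 + t ^ p ≤ (1 + t) ^ p := by
  lift t to ℝ≥0 using ht
  have h := NNReal.add_rpow_le_rpow_add 1 t hp
  have h2 := NNReal.coe_le_coe.mpr h
  push_cast at h2
  simpa using h2

lemma log_one_add_le_rpow {x p : ℝ} (hx : 0 ≤ x) (hp : 1 ≤ p) :
    Real.log (1 + x) ≤ p * x ^ (1 / p) := by
  have hp0 : 0 < p := lt_of_lt_of_le one_pos hp
  set t := x ^ (1 / p) with htdef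
  have ht : 0 ≤ t := Real.rpow_nonneg hx _
  have htp : t ^ p = x := by
    rw [htdef, ← Real.rpow_mul hx, one_div, inv_mul_cancel₀ hp0.ne', Real.rpow_one]
  calc Real.log (1 + x) = Real.log (1 + t ^ p) := by rw [htp]
    _ ≤ Real.log ((1 + t) ^ p) := by
        apply Real.log_le_log (by positivity)
        exact one_add_rpow_le t p ht hp
    _ = p * Real.log (1 + t) := Real.log_rpow (by positivity) p
    _ ≤ p * t := by
        have := Real.log_le_sub_one_of_pos (show (0:ℝ) < 1 + t by linarith)
        nlinarith

/-- Scaling of the summation `C_s(n)`: for `α > 2 (2 + log_n Ψ(n))` (expressed via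
`Ψ(n) ≤ n^(α/2 - 2 - κ)` with `κ > 0`),
`C_s(n) = O(n^(1/2 + 2/α) Ψ(n)^(1/α) log n)`. -/
theorem Cs_upper_bound (α P κ : ℝ) (hα : 2 < α) (hP : 0 < P) (hκ : 0 < κ)
    (Ψ : ℕ → ℕ)
    (hΨ : ∀ n : ℕ, 2 ≤ n → 1 ≤ Ψ n ∧ (Ψ n : ℝ) ≤ (n : ℝ) ^ (α / 2 - 2 - κ)) :
    ∃ K : ℝ, 0 < K ∧ ∃ N₀ : ℕ, ∀ n : ℕ, N₀ ≤ n →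
      (∑ i ∈ Finset.Icc 1 ⌊Real.log (Real.sqrt n / 2)⌋₊,
        ((n : ℝ) / Real.exp i) *
          Real.log (1 + P * 2 ^ α * (n : ℝ) ^ (2 - α / 2) * (Ψ n : ℝ) * Real.exp (i * α)))
        ≤ K * (n : ℝ) ^ ((1 : ℝ) / 2 + 2 / α) * (Ψ n : ℝ) ^ ((1 : ℝ) / α) * Real.log n := by
  have hα0 : (0:ℝ) < α := by linarith
  have hα1 : (1:ℝ) ≤ α := by linarith
  refine ⟨α * (P * 2 ^ α) ^ (1/α), by positivity, 2, fun n hn => ?_⟩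
  have hn2 : (2:ℝ) ≤ (n:ℝ) := by exact_mod_cast hn
  have hn0 : (0:ℝ) < (n:ℝ) := by linarith
  obtain ⟨hΨ1, -⟩ := hΨ n hn
  have hΨ0 : (0:ℝ) < (Ψ n : ℝ) := by exact_mod_cast hΨ1
  set A : ℝ := P * 2 ^ α * (n : ℝ) ^ (2 - α / 2) * (Ψ n : ℝ) with hAdef
  have hApos : 0 < A := by positivity
  set M := ⌊Real.log (Real.sqrt n / 2)⌋₊ with hMdef
  set B : ℝ := α * A ^ (1/α) * n with hBdef
  have hBpos : 0 < B := by positivity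
  have hterm : ∀ i ∈ Finset.Icc 1 M,
      ((n : ℝ) / Real.exp i) * Real.log (1 + A * Real.exp (i * α)) ≤ B := by
    intro i _
    have hx : (0:ℝ) ≤ A * Real.exp (i * α) := by positivity
    have h1 := log_one_add_le_rpow hx hα1
    have h2 : (A * Real.exp ((i:ℝ) * α)) ^ (1/α) = A ^ (1/α) * Real.exp i := by
      rw [Real.mul_rpow hApos.le (Real.exp_pos _).le, ← Real.exp_mul]
      congr 2
      field_simp
    rw [h2] at h1
    have hle : ((n : ℝ) / Real.exp i) * Real.log (1 + A * Real.exp (i * α))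
        ≤ ((n : ℝ) / Real.exp i) * (α * (A ^ (1/α) * Real.exp i)) := by
      apply mul_le_mul_of_nonneg_left _ (by positivity)
      calc Real.log (1 + A * Real.exp (i * α)) ≤ α * (A * Real.exp ((i:ℝ) * α)) ^ (1/α) := by
            exact_mod_cast log_one_add_le_rpow hx hα1
        _ = α * (A ^ (1/α) * Real.exp i) := by rw [h2]
    refine hle.trans (le_of_eq ?_)
    rw [hBdef]
    field_simp
  have hsum := Finset.sum_le_card_nsmul (Finset.Icc 1 M) _ B hterm
  rw [Nat.card_Icc, nsmul_eq_mul] at hsum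
  have hMle : ((M + 1 - 1 : ℕ) : ℝ) ≤ Real.log n := by
    simp only [Nat.add_sub_cancel]
    rcases le_or_gt (Real.log (Real.sqrt n / 2)) 0 with h | h
    · rw [hMdef, Nat.floor_of_nonpos h]
      simpa using Real.log_nonneg (by linarith)
    · have h1 : (M:ℝ) ≤ Real.log (Real.sqrt n / 2) := Nat.floor_le h.le
      refine h1.trans (Real.log_le_log (by positivity) ?_)
      have hs : Real.sqrt n ≤ n := by nlinarith [Real.sq_sqrt hn0.le, Real.sqrt_nonneg (n:ℝ)]
      linarith
  have key : ∑ i ∈ Finset.Icc 1 M, ((n : ℝ) / Real.exp i) * Real.log (1 + A * Real.exp (i * α))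
      ≤ Real.log n * B :=
    hsum.trans (mul_le_mul_of_nonneg_right hMle hBpos.le)
  refine key.trans (le_of_eq ?_)
  have hAn : A ^ (1/α) * (n:ℝ)
      = (P * 2 ^ α) ^ (1/α) * (n : ℝ) ^ ((1:ℝ)/2 + 2/α) * (Ψ n : ℝ) ^ ((1:ℝ)/α) := by
    have hnpow : ((n:ℝ) ^ (2 - α/2)) ^ (1/α) * n = (n:ℝ) ^ ((1:ℝ)/2 + 2/α) := by
      rw [← Real.rpow_mul hn0.le]
      have hadd := Real.rpow_add hn0 ((2 - α/2) * (1/α)) 1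
      rw [Real.rpow_one] at hadd
      rw [← hadd]
      congr 1
      field_simp
      ring
    rw [hAdef, Real.mul_rpow (by positivity) hΨ0.le, Real.mul_rpow (by positivity) (by positivity)]
    rw [mul_assoc, mul_comm ((Ψ n : ℝ) ^ (1/α)) (n:ℝ), ← mul_assoc, mul_assoc _ _ (n:ℝ)]
    rw [mul_assoc ((P * 2 ^ α) ^ (1/α))]
    rw [hnpow]
    ring
  rw [hBdef]
  rw [show Real.log ↑n * (α * A ^ (1 / α) * ↑n) = α * (A ^ (1/α) * (n:ℝ)) * Real.log n by ring,
    hAn]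
  ring
end

section
/- Fix real numbers α > 2, κ with 0 < κ < α/2, and b > 0. Define, for n ≥ 2, f₁(n) = ∑_{i=1}^{⌊(2κ/α) · ln(√n/2)⌋} (n / e^i) · ln(1 + b · e^{iα} / n^{κ}). Then f₁(n) = O(n^{1 − κ/α}) as n → ∞, i.e., there exist a constant K > 0 and N₀ ∈ ℕ such that f₁(n) ≤ K · n^{1 − κ/α} for all n ≥ N₀. -/
open Finset

/-- Scaling of the first partial summation `C_{s_1}`:
`∑_{i=1}^{⌊(2κ/α)ln(√n/2)⌋} (n/e^i) ln(1 + b e^{iα}/n^κ) = O(n^(1-κ/α))`. -/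
theorem Cs1_upper_bound (α κ b : ℝ) (hα : 2 < α) (hκ : 0 < κ) (hκα : κ < α / 2)
    (hb : 0 < b) :
    ∃ K : ℝ, 0 < K ∧ ∃ N₀ : ℕ, ∀ n : ℕ, N₀ ≤ n →
      (∑ i ∈ Finset.Icc 1 ⌊(2 * κ / α) * Real.log (Real.sqrt n / 2)⌋₊,
        ((n : ℝ) / Real.exp i) * Real.log (1 + b * Real.exp (i * α) / (n : ℝ) ^ κ))
        ≤ K * (n : ℝ) ^ (1 - κ / α) := by
  have hα0 : (0:ℝ) < α := by linarith
  have hα1 : (0:ℝ) < α - 1 := by linarith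
  set r := Real.exp (α - 1) with hr_def
  have hr1 : 1 < r := by
    rw [hr_def]
    have : Real.exp 0 < Real.exp (α - 1) := Real.exp_lt_exp.mpr hα1
    simpa using this
  have hr0 : 0 < r - 1 := by linarith
  refine ⟨b * r / (r - 1), by positivity, 4, ?_⟩
  intro n hn
  have hn0 : (0:ℝ) < n := by
    have : 0 < n := by omega
    exact_mod_cast this
  have hn4 : (4:ℝ) ≤ n := by exact_mod_cast hn
  have hs0 : (0:ℝ) < Real.sqrt n / 2 := by
    have := Real.sqrt_pos.mpr hn0
    linarith
  have hs1 : (1:ℝ) ≤ Real.sqrt n / 2 := by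
    have h4 : (2:ℝ) = Real.sqrt 4 := by
      rw [show (4:ℝ) = 2^2 by norm_num, Real.sqrt_sq (by norm_num)]
    have := Real.sqrt_le_sqrt hn4
    rw [← h4] at this
    linarith
  have hlog : 0 ≤ Real.log (Real.sqrt n / 2) := Real.log_nonneg hs1
  set M := ⌊(2 * κ / α) * Real.log (Real.sqrt n / 2)⌋₊ with hMdef
  have hMle : (M:ℝ) ≤ (2 * κ / α) * Real.log (Real.sqrt n / 2) :=
    Nat.floor_le (mul_nonneg (by positivity) hlog)
  -- termwise bound
  have hterm : ∀ i ∈ Finset.Icc 1 M,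
      ((n : ℝ) / Real.exp i) * Real.log (1 + b * Real.exp (i * α) / (n : ℝ) ^ κ)
        ≤ (b * (n:ℝ) ^ ((1:ℝ) - κ)) * r ^ i := by
    intro i _
    have hx : 0 ≤ b * Real.exp (i * α) / (n:ℝ) ^ κ := by positivity
    have hlog1 : Real.log (1 + b * Real.exp (i * α) / (n:ℝ) ^ κ)
        ≤ b * Real.exp (i * α) / (n:ℝ) ^ κ := by
      have := Real.log_le_sub_one_of_pos
        (show (0:ℝ) < 1 + b * Real.exp (i * α) / (n:ℝ) ^ κ by linarith)
      linarith
    have h1 : ((n : ℝ) / Real.exp i) * Real.log (1 + b * Real.exp (i * α) / (n : ℝ) ^ κ)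
        ≤ ((n : ℝ) / Real.exp i) * (b * Real.exp (i * α) / (n:ℝ) ^ κ) :=
      mul_le_mul_of_nonneg_left hlog1 (by positivity)
    refine h1.trans_eq ?_
    have hri : r ^ i = Real.exp ((i:ℝ) * (α - 1)) := (Real.exp_nat_mul _ i).symm
    rw [hri, Real.rpow_sub hn0, Real.rpow_one,
      show ((i:ℝ) * (α - 1)) = (i:ℝ) * α - i by ring, Real.exp_sub]
    have hexp : Real.exp (i : ℝ) ≠ 0 := (Real.exp_pos _).ne'
    have hnκ : (n:ℝ) ^ κ ≠ 0 := by positivity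
    field_simp
  have hsum1 : (∑ i ∈ Finset.Icc 1 M,
      ((n : ℝ) / Real.exp i) * Real.log (1 + b * Real.exp (i * α) / (n : ℝ) ^ κ))
      ≤ (b * (n:ℝ) ^ ((1:ℝ) - κ)) * ∑ i ∈ Finset.Icc 1 M, r ^ i := by
    rw [Finset.mul_sum]
    exact Finset.sum_le_sum hterm
  have hsub : Finset.Icc 1 M ⊆ Finset.range (M + 1) := by
    intro i hi
    simp only [Finset.mem_Icc] at hi
    simp only [Finset.mem_range]
    omega
  have hsum2 : (∑ i ∈ Finset.Icc 1 M, r ^ i) ≤ ∑ i ∈ Finset.range (M + 1), r ^ i :=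
    Finset.sum_le_sum_of_subset_of_nonneg hsub (fun i _ _ => by positivity)
  have hgeom : (∑ i ∈ Finset.range (M + 1), r ^ i) ≤ r ^ (M + 1) / (r - 1) := by
    rw [geom_sum_eq (ne_of_gt hr1)]
    gcongr
    linarith
  have hpow : r ^ M ≤ (n:ℝ) ^ ((1/2) * (2 * κ / α * (α - 1))) := by
    have h1 : r ^ M = Real.exp ((M:ℝ) * (α - 1)) := (Real.exp_nat_mul _ M).symm
    have h2 : Real.exp ((M:ℝ) * (α - 1))
        ≤ Real.exp ((2 * κ / α) * Real.log (Real.sqrt n / 2) * (α - 1)) := by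
      apply Real.exp_le_exp.mpr
      exact mul_le_mul_of_nonneg_right hMle (le_of_lt hα1)
    have h3 : Real.exp ((2 * κ / α) * Real.log (Real.sqrt n / 2) * (α - 1))
        = (Real.sqrt n / 2) ^ (2 * κ / α * (α - 1)) := by
      rw [Real.rpow_def_of_pos hs0]
      ring_nf
    have h4 : (Real.sqrt n / 2) ^ (2 * κ / α * (α - 1))
        ≤ (Real.sqrt n) ^ (2 * κ / α * (α - 1)) := by
      apply Real.rpow_le_rpow (le_of_lt hs0) (by linarith [Real.sqrt_nonneg (n:ℝ)])
      positivity
    have h5 : (Real.sqrt n) ^ (2 * κ / α * (α - 1))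
        = (n:ℝ) ^ ((1/2) * (2 * κ / α * (α - 1))) := by
      rw [Real.sqrt_eq_rpow, ← Real.rpow_mul (le_of_lt hn0)]
    rw [h1, ← h5]
    exact h2.trans (h3.le.trans h4)
  calc (∑ i ∈ Finset.Icc 1 M,
      ((n : ℝ) / Real.exp i) * Real.log (1 + b * Real.exp (i * α) / (n : ℝ) ^ κ))
      ≤ (b * (n:ℝ) ^ ((1:ℝ) - κ)) * ∑ i ∈ Finset.Icc 1 M, r ^ i := hsum1
    _ ≤ (b * (n:ℝ) ^ ((1:ℝ) - κ)) * (r ^ (M + 1) / (r - 1)) := by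
        have hb' : 0 ≤ b * (n:ℝ) ^ ((1:ℝ) - κ) := by positivity
        exact mul_le_mul_of_nonneg_left (hsum2.trans hgeom) hb'
    _ ≤ (b * (n:ℝ) ^ ((1:ℝ) - κ)) *
          (r * (n:ℝ) ^ ((1/2) * (2 * κ / α * (α - 1))) / (r - 1)) := by
        have : r ^ (M + 1) = r * r ^ M := by ring
        rw [this]
        gcongr
    _ = (b * r / (r - 1)) *
          ((n:ℝ) ^ ((1:ℝ) - κ) * (n:ℝ) ^ ((1/2) * (2 * κ / α * (α - 1)))) := by ring
    _ = (b * r / (r - 1)) * (n : ℝ) ^ (1 - κ / α) := by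
        rw [← Real.rpow_add hn0]
        congr 1
        field_simp
        ring
end

section
/- Fix real numbers α > 2, κ with 0 < κ < α/2, and b > 0. Define, for n ≥ 2, f₂(n) = ∑_{i=⌊(2κ/α) · ln(√n/2)⌋ + 1}^{⌊ln(√n/2)⌋} (n / e^i) · ln(1 + b · e^{iα} / n^{κ}). Then f₂(n) = O(n^{1 − κ/α} · ln n) as n → ∞, i.e., there exist a constant K > 0 and N₀ ∈ ℕ such that f₂(n) ≤ K · n^{1 − κ/α} · ln n for all n ≥ N₀. -/
open Finset

/-- Scaling of the second partial summation `C_{s_2}`: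
`∑_{i=⌊(2κ/α)ln(√n/2)⌋+1}^{⌊ln(√n/2)⌋} (n/e^i) ln(1 + b e^{iα}/n^κ) = O(n^(1-κ/α) ln n)`. -/
theorem Cs2_upper_bound (α κ b : ℝ) (hα : 2 < α) (hκ : 0 < κ) (hκα : κ < α / 2)
    (hb : 0 < b) :
    ∃ K : ℝ, 0 < K ∧ ∃ N₀ : ℕ, ∀ n : ℕ, N₀ ≤ n →
      (∑ i ∈ Finset.Icc (⌊(2 * κ / α) * Real.log (Real.sqrt n / 2)⌋₊ + 1)
          ⌊Real.log (Real.sqrt n / 2)⌋₊,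
        ((n : ℝ) / Real.exp i) * Real.log (1 + b * Real.exp (i * α) / (n : ℝ) ^ κ))
        ≤ K * (n : ℝ) ^ (1 - κ / α) * Real.log n := by
  have hα0 : (0:ℝ) < α := by linarith
  set r : ℝ := Real.exp (-1) with hrdef
  have hr0 : 0 < r := Real.exp_pos _
  have hr1 : r < 1 := by
    rw [hrdef]; exact Real.exp_lt_one_iff.2 (by norm_num)
  have hrinv : 0 < (1 - r)⁻¹ := inv_pos.2 (by linarith)
  have hlb : 0 < Real.log (1 + b) := Real.log_pos (by linarith)
  set C₁ : ℝ := Real.log (1 + b) + α / 2 with hC₁def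
  have hC₁ : 0 < C₁ := by rw [hC₁def]; linarith
  have h2pow : (0:ℝ) < (2:ℝ) ^ (2 * κ / α) := Real.rpow_pos_of_pos (by norm_num) _
  refine ⟨C₁ * ((1 - r)⁻¹ * (2:ℝ) ^ (2 * κ / α)), by positivity, 16, fun n hn => ?_⟩
  have hn0 : (0:ℝ) < (n:ℝ) := by
    have : (16:ℝ) ≤ (n:ℝ) := by exact_mod_cast hn
    linarith
  have hn1 : (1:ℝ) ≤ (n:ℝ) := by
    have : (16:ℝ) ≤ (n:ℝ) := by exact_mod_cast hn
    linarith
  have hn16 : (16:ℝ) ≤ (n:ℝ) := by exact_mod_cast hn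
  have hsqrt : (4:ℝ) ≤ Real.sqrt n := by
    rw [show (4:ℝ) = Real.sqrt 16 by
      rw [show (16:ℝ) = 4^2 by norm_num, Real.sqrt_sq (by norm_num)]]
    exact Real.sqrt_le_sqrt hn16
  set L : ℝ := Real.log (Real.sqrt n / 2) with hLdef
  have hL0 : 0 ≤ L := Real.log_nonneg (by linarith)
  have hlogn1 : (1:ℝ) ≤ Real.log n := by
    rw [Real.le_log_iff_exp_le hn0]
    calc Real.exp 1 ≤ 2.7182818286 := (Real.exp_one_lt_d9).le
    _ ≤ (n:ℝ) := by linarith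
  have hlogn0 : (0:ℝ) ≤ Real.log n := by linarith
  have hLle : L ≤ Real.log n / 2 := by
    rw [hLdef, ← Real.log_sqrt hn0.le]
    apply Real.log_le_log (by linarith)
    have := Real.sqrt_nonneg (n:ℝ)
    linarith
  set m : ℕ := ⌊(2 * κ / α) * L⌋₊ + 1 with hmdef
  set M : ℕ := ⌊L⌋₊ with hMdef
  -- Step A: pointwise bound on the log factor
  have stepA : ∀ i ∈ Finset.Icc m M,
      ((n : ℝ) / Real.exp i) * Real.log (1 + b * Real.exp (i * α) / (n : ℝ) ^ κ)
        ≤ ((n : ℝ) / Real.exp i) * (C₁ * Real.log n) := by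
    intro i hi
    have hiM : (i:ℝ) ≤ L := by
      have h1 : i ≤ M := (Finset.mem_Icc.1 hi).2
      have h2 : (i:ℝ) ≤ (M:ℝ) := by exact_mod_cast h1
      exact h2.trans (Nat.floor_le hL0)
    have hexpiα : Real.exp (i * α) ≤ (n:ℝ) ^ (α/2) := by
      rw [Real.rpow_def_of_pos hn0]
      apply Real.exp_le_exp.2
      have : (i:ℝ) ≤ Real.log n / 2 := hiM.trans hLle
      nlinarith
    have hnκ : (1:ℝ) ≤ (n:ℝ) ^ κ := Real.one_le_rpow hn1 hκ.le
    have hnα2 : (1:ℝ) ≤ (n:ℝ) ^ (α/2) := Real.one_le_rpow hn1 (by linarith)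
    have hexpi : 0 < Real.exp (i * α) := Real.exp_pos _
    have harg : 1 + b * Real.exp (i * α) / (n : ℝ) ^ κ ≤ (1 + b) * (n:ℝ) ^ (α/2) := by
      have h1 : b * Real.exp (i * α) / (n : ℝ) ^ κ ≤ b * Real.exp (i * α) := by
        apply div_le_self (by positivity) hnκ
      nlinarith
    have hargpos : 0 < 1 + b * Real.exp (i * α) / (n : ℝ) ^ κ := by positivity
    have hlog : Real.log (1 + b * Real.exp (i * α) / (n : ℝ) ^ κ) ≤ C₁ * Real.log n := by
      calc Real.log (1 + b * Real.exp (i * α) / (n : ℝ) ^ κ)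
          ≤ Real.log ((1 + b) * (n:ℝ) ^ (α/2)) := Real.log_le_log hargpos harg
        _ = Real.log (1 + b) + (α/2) * Real.log n := by
            rw [Real.log_mul (by linarith) (by positivity), Real.log_rpow hn0]
        _ ≤ Real.log (1 + b) * Real.log n + (α/2) * Real.log n := by nlinarith
        _ = C₁ * Real.log n := by rw [hC₁def]; ring
    exact mul_le_mul_of_nonneg_left hlog (by positivity)
  -- Step B: geometric sum bound
  have hri : ∀ i : ℕ, (n:ℝ) / Real.exp i = (n:ℝ) * r ^ i := by
    intro i
    rw [hrdef, ← Real.exp_nat_mul, div_eq_mul_inv, ← Real.exp_neg]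
    ring_nf
  have geomsum : ∀ N : ℕ, ∑ j ∈ Finset.range N, r ^ j ≤ (1 - r)⁻¹ := by
    intro N
    have := Summable.sum_le_tsum (Finset.range N) (fun j _ => by positivity)
      (summable_geometric_of_lt_one hr0.le hr1)
    rwa [tsum_geometric_of_lt_one hr0.le hr1] at this
  have stepB : ∑ i ∈ Finset.Icc m M, (n:ℝ) / Real.exp i
      ≤ (n:ℝ) * (r ^ m * (1 - r)⁻¹) := by
    calc ∑ i ∈ Finset.Icc m M, (n:ℝ) / Real.exp i
        = ∑ i ∈ Finset.Icc m M, (n:ℝ) * r ^ i := by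
          exact Finset.sum_congr rfl fun i _ => hri i
      _ = (n:ℝ) * ∑ i ∈ Finset.Icc m M, r ^ i := by rw [Finset.mul_sum]
      _ ≤ (n:ℝ) * (r ^ m * (1 - r)⁻¹) := by
          apply mul_le_mul_of_nonneg_left _ hn0.le
          rw [← Finset.Ico_add_one_right_eq_Icc, Finset.sum_Ico_eq_sum_range]
          calc ∑ j ∈ Finset.range (M + 1 - m), r ^ (m + j)
              = r ^ m * ∑ j ∈ Finset.range (M + 1 - m), r ^ j := by
                rw [Finset.mul_sum]
                exact Finset.sum_congr rfl fun j _ => pow_add r m j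
            _ ≤ r ^ m * (1 - r)⁻¹ := by
                exact mul_le_mul_of_nonneg_left (geomsum _) (by positivity)
  -- Step C: bound on r ^ m
  have stepC : r ^ m ≤ (2:ℝ) ^ (2 * κ / α) * (n:ℝ) ^ (-(κ/α)) := by
    have h1 : r ^ m = Real.exp (-(m:ℝ)) := by
      rw [hrdef, ← Real.exp_nat_mul]; ring_nf
    have h2 : (2 * κ / α) * L < (m:ℝ) := by
      rw [hmdef]
      push_cast
      exact Nat.lt_floor_add_one _
    have hLeq : L = Real.log n / 2 - Real.log 2 := by
      rw [hLdef, Real.log_div (by positivity) (by norm_num), Real.log_sqrt hn0.le]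
    have h3 : r ^ m ≤ Real.exp (-(2 * κ / α) * L) := by
      rw [h1]
      exact Real.exp_le_exp.2 (by linarith)
    calc r ^ m ≤ Real.exp (-(2 * κ / α) * L) := h3
      _ = Real.exp (Real.log 2 * (2 * κ / α)) * Real.exp (Real.log n * (-(κ/α))) := by
          rw [← Real.exp_add]
          congr 1
          rw [hLeq]
          field_simp
          ring
      _ = (2:ℝ) ^ (2 * κ / α) * (n:ℝ) ^ (-(κ/α)) := by
          rw [Real.rpow_def_of_pos (by norm_num : (0:ℝ) < 2),
            Real.rpow_def_of_pos hn0]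
  -- Combine
  have key : ∑ i ∈ Finset.Icc m M,
      ((n : ℝ) / Real.exp i) * Real.log (1 + b * Real.exp (i * α) / (n : ℝ) ^ κ)
      ≤ (C₁ * Real.log n) * ((n:ℝ) * (r ^ m * (1 - r)⁻¹)) := by
    calc ∑ i ∈ Finset.Icc m M,
        ((n : ℝ) / Real.exp i) * Real.log (1 + b * Real.exp (i * α) / (n : ℝ) ^ κ)
        ≤ ∑ i ∈ Finset.Icc m M, ((n : ℝ) / Real.exp i) * (C₁ * Real.log n) :=
          Finset.sum_le_sum stepA
      _ = (C₁ * Real.log n) * ∑ i ∈ Finset.Icc m M, (n : ℝ) / Real.exp i := by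
          rw [Finset.mul_sum]; exact Finset.sum_congr rfl fun i _ => by ring
      _ ≤ (C₁ * Real.log n) * ((n:ℝ) * (r ^ m * (1 - r)⁻¹)) := by
          exact mul_le_mul_of_nonneg_left stepB (by positivity)
  have hrpow : (n:ℝ) * (n:ℝ) ^ (-(κ/α)) = (n:ℝ) ^ (1 - κ/α) := by
    rw [show (1 - κ/α) = 1 + -(κ/α) by ring, Real.rpow_add hn0, Real.rpow_one]
  calc ∑ i ∈ Finset.Icc m M,
      ((n : ℝ) / Real.exp i) * Real.log (1 + b * Real.exp (i * α) / (n : ℝ) ^ κ)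
      ≤ (C₁ * Real.log n) * ((n:ℝ) * (r ^ m * (1 - r)⁻¹)) := key
    _ ≤ (C₁ * Real.log n) * ((n:ℝ) * (((2:ℝ) ^ (2 * κ / α) * (n:ℝ) ^ (-(κ/α))) * (1 - r)⁻¹)) := by
        apply mul_le_mul_of_nonneg_left _ (by positivity)
        apply mul_le_mul_of_nonneg_left _ hn0.le
        exact mul_le_mul_of_nonneg_right stepC hrinv.le
    _ = C₁ * ((1 - r)⁻¹ * (2:ℝ) ^ (2 * κ / α)) * ((n:ℝ) * (n:ℝ) ^ (-(κ/α))) * Real.log n := by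
        ring
    _ = C₁ * ((1 - r)⁻¹ * (2:ℝ) ^ (2 * κ / α)) * (n:ℝ) ^ (1 - κ/α) * Real.log n := by
        rw [hrpow]
end

section
/- Fix real numbers α > 2, P > 0 and κ > 0, and let Ψ : ℕ → ℕ satisfy 1 ≤ Ψ(n) ≤ n^{α/2 − 2 − κ} for all n ≥ 2. Define, for n ≥ 2, C_s(n) = ∑_{i=1}^{⌊ln(√n/2)⌋} (n / e^i) · ln(1 + P · 2^α · n^{2 − α/2} · Ψ(n) · e^{iα}) and B(n) = (e − 1) · Ψ(n) · C_s(n) + (2(e − 1)/e) · Ψ(n) · √n · ln(1 + P · n² · Ψ(n)). Then B(n) = O(n^{1/2 + 2/α} · Ψ(n)^{1 + 1/α} · ln n) as n → ∞, i.e., there exist a constant K > 0 and N₀ ∈ ℕ such that B(n) ≤ K · n^{1/2 + 2/α} · Ψ(n)^{1 + 1/α} · ln n for all n ≥ N₀. -/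
open Finset

lemma log_one_add_le {a x : ℝ} (ha : 1 ≤ a) (hx : 0 ≤ x) :
    Real.log (1 + x) ≤ a * x ^ ((1:ℝ) / a) := by
  have ha0 : (0:ℝ) < a := lt_of_lt_of_le one_pos ha
  have h1x : (0:ℝ) < 1 + x := by linarith
  have hkey : (1 + x) ^ ((1:ℝ)/a) ≤ 1 + x ^ ((1:ℝ)/a) := by
    have h := NNReal.rpow_add_le_add_rpow (1 : NNReal) x.toNNReal
      (by positivity : (0:ℝ) ≤ 1/a) (by rw [div_le_one ha0]; exact ha)
    have h' := (NNReal.coe_le_coe).2 h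
    push_cast [NNReal.coe_rpow] at h'
    rw [Real.coe_toNNReal x hx] at h'
    simpa using h'
  have hlog : Real.log ((1 + x) ^ ((1:ℝ)/a)) = (1/a) * Real.log (1 + x) :=
    Real.log_rpow h1x _
  have h2 : Real.log ((1 + x) ^ ((1:ℝ)/a)) ≤ (1 + x) ^ ((1:ℝ)/a) - 1 :=
    Real.log_le_sub_one_of_pos (Real.rpow_pos_of_pos h1x _)
  have h3 : (1/a) * Real.log (1 + x) ≤ x ^ ((1:ℝ)/a) := by
    rw [← hlog]; linarith
  calc Real.log (1 + x) = a * ((1/a) * Real.log (1 + x)) := by field_simp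
    _ ≤ a * x ^ ((1:ℝ)/a) := mul_le_mul_of_nonneg_left h3 ha0.le

/-- Scaling of the full cut-set upper bound
`B(n) = (e-1) Ψ(n) C_s(n) + (2(e-1)/e) Ψ(n) √n ln(1 + P n² Ψ(n))`:
`B(n) = O(n^(1/2 + 2/α) Ψ(n)^(1 + 1/α) ln n)`. -/
theorem cutset_bound_scaling (α P κ : ℝ) (hα : 2 < α) (hP : 0 < P) (hκ : 0 < κ)
    (Ψ : ℕ → ℕ)
    (hΨ : ∀ n : ℕ, 2 ≤ n → 1 ≤ Ψ n ∧ (Ψ n : ℝ) ≤ (n : ℝ) ^ (α / 2 - 2 - κ)) :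
    ∃ K : ℝ, 0 < K ∧ ∃ N₀ : ℕ, ∀ n : ℕ, N₀ ≤ n →
      (Real.exp 1 - 1) * (Ψ n : ℝ) *
          (∑ i ∈ Finset.Icc 1 ⌊Real.log (Real.sqrt n / 2)⌋₊,
            ((n : ℝ) / Real.exp i) *
              Real.log (1 + P * 2 ^ α * (n : ℝ) ^ (2 - α / 2) * (Ψ n : ℝ) * Real.exp (i * α)))
        + (2 * (Real.exp 1 - 1) / Real.exp 1) * (Ψ n : ℝ) * Real.sqrt n *
            Real.log (1 + P * (n : ℝ) ^ 2 * (Ψ n : ℝ))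
      ≤ K * (n : ℝ) ^ ((1 : ℝ) / 2 + 2 / α) * (Ψ n : ℝ) ^ (1 + (1 : ℝ) / α) * Real.log n := by
  have hα1 : (1:ℝ) ≤ α := by linarith
  have hα0 : (0:ℝ) < α := by linarith
  have he1 : (1:ℝ) < Real.exp 1 := by
    have := Real.exp_one_gt_d9; linarith
  have hP' : (0:ℝ) < P ^ ((1:ℝ)/α) := Real.rpow_pos_of_pos hP _
  refine ⟨(Real.exp 1 - 1) * (α * P ^ ((1:ℝ)/α))
      + (2 * (Real.exp 1 - 1) / Real.exp 1) * (α * P ^ ((1:ℝ)/α)), ?_, 3, ?_⟩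
  · have h2 : (0:ℝ) < Real.exp 1 := Real.exp_pos 1
    have hA : (0:ℝ) < Real.exp 1 - 1 := by linarith
    exact add_pos (mul_pos hA (mul_pos hα0 hP'))
      (mul_pos (by positivity) (mul_pos hα0 hP'))
  intro n hn
  have hn2 : 2 ≤ n := le_trans (by norm_num) hn
  obtain ⟨hψnat, -⟩ := hΨ n hn2
  have hψ1 : (1:ℝ) ≤ (Ψ n : ℝ) := by exact_mod_cast hψnat
  have hψ0 : (0:ℝ) < (Ψ n : ℝ) := lt_of_lt_of_le one_pos hψ1
  have hN3 : (3:ℝ) ≤ (n:ℝ) := by exact_mod_cast hn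
  have hN0 : (0:ℝ) < (n:ℝ) := by linarith
  have hlog1 : 1 ≤ Real.log n := by
    rw [Real.le_log_iff_exp_le hN0]
    have := Real.exp_one_lt_d9; linarith
  have hlog0 : 0 ≤ Real.log n := by linarith
  have heA : (0:ℝ) < Real.exp 1 - 1 := by linarith
  -- identities
  have e1 : ((2:ℝ) ^ α) ^ ((1:ℝ)/α) = 2 := by
    rw [← Real.rpow_mul (by norm_num : (0:ℝ) ≤ 2), mul_one_div, div_self hα0.ne',
      Real.rpow_one]
  have e2' : ((n:ℝ) ^ (2 - α/2)) ^ ((1:ℝ)/α) * (n:ℝ) = (n:ℝ) ^ ((1:ℝ)/2 + 2/α) := by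
    rw [← Real.rpow_mul hN0.le, ← Real.rpow_add_one hN0.ne']
    congr 1
    field_simp
    ring
  have e3 : ∀ i : ℕ, (Real.exp ((i:ℝ) * α)) ^ ((1:ℝ)/α) = Real.exp i := by
    intro i
    rw [← Real.exp_one_rpow ((i:ℝ) * α), ← Real.rpow_mul (Real.exp_pos 1).le,
      show ((i:ℝ) * α) * ((1:ℝ)/α) = (i:ℝ) by field_simp, Real.exp_one_rpow]
  have hψpow : (Ψ n : ℝ) ^ (1 + (1:ℝ)/α) = (Ψ n : ℝ) * (Ψ n : ℝ) ^ ((1:ℝ)/α) := by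
    rw [Real.rpow_add hψ0, Real.rpow_one]
  -- per-summand bound
  have hterm : ∀ i ∈ Finset.Icc 1 ⌊Real.log (Real.sqrt n / 2)⌋₊,
      ((n : ℝ) / Real.exp i) *
        Real.log (1 + P * 2 ^ α * (n : ℝ) ^ (2 - α / 2) * (Ψ n : ℝ) * Real.exp (i * α))
      ≤ α * (2 * P ^ ((1:ℝ)/α) * (Ψ n : ℝ) ^ ((1:ℝ)/α) * (n:ℝ) ^ ((1:ℝ)/2 + 2/α)) := by
    intro i _
    have hx : (0:ℝ) ≤ P * 2 ^ α * (n : ℝ) ^ (2 - α / 2) * (Ψ n : ℝ) * Real.exp (i * α) := by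
      positivity
    have h1 := log_one_add_le hα1 hx
    have hpow : (P * 2 ^ α * (n : ℝ) ^ (2 - α / 2) * (Ψ n : ℝ) * Real.exp ((i:ℝ) * α)) ^ ((1:ℝ)/α)
        = P ^ ((1:ℝ)/α) * ((2:ℝ) ^ α) ^ ((1:ℝ)/α) * ((n:ℝ) ^ (2 - α/2)) ^ ((1:ℝ)/α) *
          (Ψ n : ℝ) ^ ((1:ℝ)/α) * (Real.exp ((i:ℝ) * α)) ^ ((1:ℝ)/α) := by
      rw [Real.mul_rpow (by positivity) (by positivity),
        Real.mul_rpow (by positivity) (by positivity),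
        Real.mul_rpow (by positivity) (by positivity),
        Real.mul_rpow hP.le (by positivity)]
    rw [hpow, e1, e3 i] at h1
    have h2 := mul_le_mul_of_nonneg_left h1
      (show (0:ℝ) ≤ (n:ℝ) / Real.exp i by positivity)
    refine h2.trans_eq ?_
    have heq : ((n:ℝ) / Real.exp i) *
        (α * (P ^ ((1:ℝ)/α) * 2 * ((n:ℝ) ^ (2 - α/2)) ^ ((1:ℝ)/α) *
          (Ψ n : ℝ) ^ ((1:ℝ)/α) * Real.exp i))
        = α * (2 * P ^ ((1:ℝ)/α) * (Ψ n : ℝ) ^ ((1:ℝ)/α) *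
          (((n:ℝ) ^ (2 - α/2)) ^ ((1:ℝ)/α) * (n:ℝ))) := by
      field_simp [Real.exp_ne_zero]
    rw [heq, e2']
  -- floor bound
  have hM : ((⌊Real.log (Real.sqrt n / 2)⌋₊ : ℕ) : ℝ) ≤ Real.log n / 2 := by
    rcases le_or_gt (Real.log (Real.sqrt n / 2)) 0 with h | h
    · rw [Nat.floor_of_nonpos h]
      simp only [Nat.cast_zero]
      linarith
    · refine (Nat.floor_le h.le).trans ?_
      have hs : Real.sqrt n / 2 ≤ Real.sqrt n := by
        have : (0:ℝ) ≤ Real.sqrt n := Real.sqrt_nonneg _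
        linarith
      have hpos : (0:ℝ) < Real.sqrt n / 2 := by
        have := Real.sqrt_pos.2 hN0
        linarith
      calc Real.log (Real.sqrt n / 2) ≤ Real.log (Real.sqrt n) :=
            Real.log_le_log hpos hs
        _ = Real.log n / 2 := Real.log_sqrt hN0.le
  -- sum bound
  have hsum : (∑ i ∈ Finset.Icc 1 ⌊Real.log (Real.sqrt n / 2)⌋₊,
        ((n : ℝ) / Real.exp i) *
          Real.log (1 + P * 2 ^ α * (n : ℝ) ^ (2 - α / 2) * (Ψ n : ℝ) * Real.exp (i * α)))
      ≤ (Real.log n / 2) *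
        (α * (2 * P ^ ((1:ℝ)/α) * (Ψ n : ℝ) ^ ((1:ℝ)/α) * (n:ℝ) ^ ((1:ℝ)/2 + 2/α))) := by
    have h := Finset.sum_le_card_nsmul _ _ _ hterm
    rw [Nat.card_Icc, Nat.add_sub_cancel, nsmul_eq_mul] at h
    exact h.trans (mul_le_mul_of_nonneg_right hM (by positivity))
  -- first term
  have hT1 : (Real.exp 1 - 1) * (Ψ n : ℝ) *
      (∑ i ∈ Finset.Icc 1 ⌊Real.log (Real.sqrt n / 2)⌋₊,
        ((n : ℝ) / Real.exp i) *
          Real.log (1 + P * 2 ^ α * (n : ℝ) ^ (2 - α / 2) * (Ψ n : ℝ) * Real.exp (i * α)))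
      ≤ (Real.exp 1 - 1) * (α * P ^ ((1:ℝ)/α)) * (n:ℝ) ^ ((1:ℝ)/2 + 2/α)
          * (Ψ n : ℝ) ^ (1 + (1:ℝ)/α) * Real.log n := by
    have h := mul_le_mul_of_nonneg_left hsum
      (show (0:ℝ) ≤ (Real.exp 1 - 1) * (Ψ n : ℝ) by positivity)
    refine h.trans_eq ?_
    rw [hψpow]
    ring
  -- second term
  have hx2 : (0:ℝ) ≤ P * (n:ℝ)^2 * (Ψ n : ℝ) := by positivity
  have h2log := log_one_add_le hα1 hx2
  have hpow2 : (P * (n:ℝ)^2 * (Ψ n : ℝ)) ^ ((1:ℝ)/α)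
      = P ^ ((1:ℝ)/α) * ((n:ℝ) ^ ((2:ℝ)*(1/α))) * (Ψ n : ℝ) ^ ((1:ℝ)/α) := by
    rw [Real.mul_rpow (by positivity) hψ0.le, Real.mul_rpow hP.le (by positivity)]
    congr 1
    rw [← Real.rpow_natCast (n:ℝ) 2, ← Real.rpow_mul hN0.le]
    norm_num
  have hsqrt : Real.sqrt n * (n:ℝ) ^ ((2:ℝ)*(1/α)) = (n:ℝ) ^ ((1:ℝ)/2 + 2/α) := by
    rw [Real.sqrt_eq_rpow, ← Real.rpow_add hN0]
    congr 1
    ring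
  have hT2 : (2 * (Real.exp 1 - 1) / Real.exp 1) * (Ψ n : ℝ) * Real.sqrt n *
      Real.log (1 + P * (n : ℝ) ^ 2 * (Ψ n : ℝ))
      ≤ (2 * (Real.exp 1 - 1) / Real.exp 1) * (α * P ^ ((1:ℝ)/α)) * (n:ℝ) ^ ((1:ℝ)/2 + 2/α)
          * (Ψ n : ℝ) ^ (1 + (1:ℝ)/α) * Real.log n := by
    have hc0 : (0:ℝ) ≤ (2 * (Real.exp 1 - 1) / Real.exp 1) * (Ψ n : ℝ) * Real.sqrt n := by
      positivity
    have h := mul_le_mul_of_nonneg_left h2log hc0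
    refine h.trans ?_
    have heq2 : (2 * (Real.exp 1 - 1) / Real.exp 1) * (Ψ n : ℝ) * Real.sqrt n *
        (α * (P * (n:ℝ)^2 * (Ψ n : ℝ)) ^ ((1:ℝ)/α))
        = (2 * (Real.exp 1 - 1) / Real.exp 1) * (α * P ^ ((1:ℝ)/α)) *
          (n:ℝ) ^ ((1:ℝ)/2 + 2/α) * (Ψ n : ℝ) ^ (1 + (1:ℝ)/α) := by
      rw [hpow2, hψpow, ← hsqrt]
      ring
    rw [heq2]
    refine le_mul_of_one_le_right ?_ hlog1
    positivity
  refine le_trans (add_le_add hT1 hT2) (le_of_eq ?_)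
  ring
end

section
/- Let s > 0 and let X_s, Y_s, X_d, Y_d be independent random variables, each uniformly distributed on the interval [0, s]. Let D = √((X_s − X_d)² + (Y_s − Y_d)²) be the Euclidean distance between the points (X_s, Y_s) and (X_d, Y_d). Then for every z ≥ 0, ℙ(D ≤ z) ≤ 2z/s. -/
open MeasureTheory ProbabilityTheory

/-- For four independent points coordinates, each uniform on `[0, s]`, the distance
`D` between `(X_s, Y_s)` and `(X_d, Y_d)` satisfies `ℙ(D ≤ z) ≤ 2z/s` for all `z ≥ 0`. -/
theorem distance_cdf_upper_bound
    (Ω : Type) [MeasurableSpace Ω] (Pr : Measure Ω) [IsProbabilityMeasure Pr]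
    (s : ℝ) (hs : 0 < s)
    (Xs Ys Xd Yd : Ω → ℝ)
    (hXs : Measurable Xs) (hYs : Measurable Ys)
    (hXd : Measurable Xd) (hYd : Measurable Yd)
    (hindep : iIndepFun ![Xs, Ys, Xd, Yd] Pr)
    (hunifXs : Measure.map Xs Pr = (ENNReal.ofReal s)⁻¹ • volume.restrict (Set.Icc 0 s))
    (hunifYs : Measure.map Ys Pr = (ENNReal.ofReal s)⁻¹ • volume.restrict (Set.Icc 0 s))
    (hunifXd : Measure.map Xd Pr = (ENNReal.ofReal s)⁻¹ • volume.restrict (Set.Icc 0 s))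
    (hunifYd : Measure.map Yd Pr = (ENNReal.ofReal s)⁻¹ • volume.restrict (Set.Icc 0 s)) :
    ∀ z : ℝ, 0 ≤ z →
      Pr {ω | Real.sqrt ((Xs ω - Xd ω) ^ 2 + (Ys ω - Yd ω) ^ 2) ≤ z}
        ≤ ENNReal.ofReal (2 * z / s) := by
  intro z hz
  set μ : Measure ℝ := (ENNReal.ofReal s)⁻¹ • volume.restrict (Set.Icc 0 s) with hμ
  have hs0 : ENNReal.ofReal s ≠ 0 := by simp [ENNReal.ofReal_eq_zero, not_le, hs]
  have hstop : ENNReal.ofReal s ≠ ⊤ := ENNReal.ofReal_ne_top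
  have hμuniv : μ Set.univ = 1 := by
    simp [hμ, Real.volume_Icc, hs.le, ENNReal.inv_mul_cancel hs0 hstop]
  -- independence of Xs and Xd
  have hind : IndepFun Xs Xd Pr := by
    have := hindep.indepFun (i := 0) (j := 2) (by decide)
    simpa using this
  have hmap : Measure.map (fun ω => (Xs ω, Xd ω)) Pr = μ.prod μ := by
    rw [(indepFun_iff_map_prod_eq_prod_map_map hXs.aemeasurable hXd.aemeasurable).mp hind,
      hunifXs, hunifXd]
  -- the event is contained in {|Xs - Xd| ≤ z}
  have hsub : {ω | Real.sqrt ((Xs ω - Xd ω) ^ 2 + (Ys ω - Yd ω) ^ 2) ≤ z}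
      ⊆ {ω | |Xs ω - Xd ω| ≤ z} := by
    intro ω hω
    have h1 : |Xs ω - Xd ω| ≤ Real.sqrt ((Xs ω - Xd ω) ^ 2 + (Ys ω - Yd ω) ^ 2) := by
      rw [← Real.sqrt_sq_eq_abs]
      exact Real.sqrt_le_sqrt (by nlinarith [sq_nonneg (Ys ω - Yd ω)])
    exact h1.trans hω
  refine le_trans (measure_mono hsub) ?_
  have hSmeas : MeasurableSet {p : ℝ × ℝ | |p.1 - p.2| ≤ z} :=
    measurableSet_le (by fun_prop) measurable_const
  have hrw : Pr {ω | |Xs ω - Xd ω| ≤ z}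
      = (μ.prod μ) {p : ℝ × ℝ | |p.1 - p.2| ≤ z} := by
    rw [← hmap, Measure.map_apply (hXs.prodMk hXd) hSmeas]
    rfl
  rw [hrw]
  have hslice : ∀ x : ℝ, μ {y : ℝ | |x - y| ≤ z} ≤ (ENNReal.ofReal s)⁻¹ * ENNReal.ofReal (2 * z) := by
    intro x
    have hset : {y : ℝ | |x - y| ≤ z} = Set.Icc (x - z) (x + z) := by
      ext y
      simp only [Set.mem_setOf_eq, Set.mem_Icc, abs_le]
      constructor <;> intro h <;> constructor <;> linarith [h.1, h.2]
    rw [hset, hμ]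
    simp only [Measure.smul_apply, smul_eq_mul]
    refine mul_le_mul_right ?_ _
    refine le_trans (Measure.restrict_le_self _) ?_
    rw [Real.volume_Icc]
    exact ENNReal.ofReal_le_ofReal (by linarith)
  calc (μ.prod μ) {p : ℝ × ℝ | |p.1 - p.2| ≤ z}
      = ∫⁻ x, μ {y : ℝ | |x - y| ≤ z} ∂μ := by
        rw [Measure.prod_apply hSmeas]; rfl
    _ ≤ ∫⁻ _, (ENNReal.ofReal s)⁻¹ * ENNReal.ofReal (2 * z) ∂μ :=
        lintegral_mono hslice
    _ = (ENNReal.ofReal s)⁻¹ * ENNReal.ofReal (2 * z) := by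
        rw [lintegral_const, hμuniv, mul_one]
    _ = ENNReal.ofReal (2 * z / s) := by
        rw [ENNReal.ofReal_div_of_pos hs, ENNReal.div_eq_inv_mul]
end

section
/- Let D be a real-valued random variable whose law is absolutely continuous with respect to Lebesgue measure (i.e., D has an integrable probability density function on ℝ). Then the fractional part of t·D converges in distribution to the uniform distribution on [0, 1] as t → ∞; precisely, for every x ∈ [0, 1], lim_{t → ∞} ℙ(fract(t·D) ≤ x) = x, where fract(y) = y − ⌊y⌋ and the limit is taken as the real parameter t tends to +∞. -/
open MeasureTheory Filter


noncomputable def hh (x u : ℝ) : ℝ := (if Int.fract u ≤ x then (1:ℝ) else 0) - x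

lemma hh_meas (x : ℝ) : Measurable (hh x) := by
  apply Measurable.sub _ measurable_const
  exact Measurable.ite (measurableSet_le measurable_fract measurable_const)
    measurable_const measurable_const

lemma hh_bound {x : ℝ} (hx : x ∈ Set.Icc (0:ℝ) 1) (u : ℝ) : ‖hh x u‖ ≤ 1 := by
  obtain ⟨h0, h1⟩ := hx
  unfold hh
  rw [Real.norm_eq_abs, abs_le]
  split <;> constructor <;> linarith

lemma hh_periodic (x : ℝ) : Function.Periodic (hh x) 1 := by
  intro u; unfold hh; rw [Int.fract_add_one]

lemma hh_intInt {x : ℝ} (hx : x ∈ Set.Icc (0:ℝ) 1) (a b : ℝ) :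
    IntervalIntegrable (hh x) volume a b := by
  refine IntervalIntegrable.mono_fun' (g := fun _ => (1:ℝ)) intervalIntegrable_const
    ((hh_meas x).aestronglyMeasurable) ?_
  exact Filter.Eventually.of_forall (fun u => hh_bound hx u)

lemma hh_integral_01 {x : ℝ} (hx : x ∈ Set.Icc (0:ℝ) 1) :
    ∫ u in (0:ℝ)..1, hh x u = 0 := by
  have key : ∫ u in (0:ℝ)..1, (if Int.fract u ≤ x then (1:ℝ) else 0) = x := by
    rw [intervalIntegral.integral_of_le zero_le_one,
      MeasureTheory.integral_Ioc_eq_integral_Ioo]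
    have : ∀ u ∈ Set.Ioo (0:ℝ) 1,
        (if Int.fract u ≤ x then (1:ℝ) else 0) = Set.indicator (Set.Iic x) (fun _ => (1:ℝ)) u := by
      intro u hu
      rw [Int.fract_eq_self.2 ⟨hu.1.le, hu.2⟩, Set.indicator_apply]
      simp [Set.mem_Iic]
    rw [MeasureTheory.setIntegral_congr_fun measurableSet_Ioo this,
      MeasureTheory.setIntegral_indicator measurableSet_Iic]
    simp only [MeasureTheory.setIntegral_const, smul_eq_mul, mul_one]
    rcases eq_or_lt_of_le hx.2 with h1 | h1
    · have : Set.Ioo (0:ℝ) 1 ∩ Set.Iic x = Set.Ioo 0 1 := by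
        rw [Set.inter_eq_left]; intro u hu; exact le_of_lt (h1 ▸ hu.2)
      rw [this]; simp [← h1, hx.1]
    · have : Set.Ioo (0:ℝ) 1 ∩ Set.Iic x = Set.Ioc 0 x := by
        ext u; simp only [Set.mem_inter_iff, Set.mem_Ioo, Set.mem_Iic, Set.mem_Ioc]
        constructor
        · rintro ⟨⟨h2, h3⟩, h4⟩; exact ⟨h2, h4⟩
        · rintro ⟨h2, h4⟩; exact ⟨⟨h2, lt_of_le_of_lt h4 h1⟩, h4⟩
      rw [this]; simp [Real.volume_Ioc, hx.1]
  have hite : IntervalIntegrable (fun u => if Int.fract u ≤ x then (1:ℝ) else 0) volume 0 1 := by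
    refine IntervalIntegrable.mono_fun' (g := fun _ => (1:ℝ)) intervalIntegrable_const
      ?_ (Filter.Eventually.of_forall (fun u => ?_))
    · exact (Measurable.ite (measurableSet_le measurable_fract measurable_const)
        measurable_const measurable_const).aestronglyMeasurable
    · simp only [Real.norm_eq_abs]; split <;> simp
  unfold hh
  rw [intervalIntegral.integral_sub hite intervalIntegrable_const, key]
  simp

lemma hh_H_bound {x : ℝ} (hx : x ∈ Set.Icc (0:ℝ) 1) (u : ℝ) :
    ‖∫ s in (0:ℝ)..u, hh x s‖ ≤ 1 := by
  have hsplit : ∫ s in (0:ℝ)..u, hh x s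
      = (∫ s in (0:ℝ)..(⌊u⌋ : ℝ), hh x s) + ∫ s in (⌊u⌋ : ℝ)..u, hh x s :=
    (intervalIntegral.integral_add_adjacent_intervals (hh_intInt hx _ _) (hh_intInt hx _ _)).symm
  have h1 : ∫ s in (0:ℝ)..(⌊u⌋ : ℝ), hh x s = 0 := by
    have := (hh_periodic x).intervalIntegral_add_zsmul_eq ⌊u⌋ 0 (fun a b => hh_intInt hx a b)
    simp only [zero_add, zsmul_eq_mul, smul_eq_mul, mul_one] at this
    rw [this, hh_integral_01 hx, mul_zero]
  have h2 : ‖∫ s in (⌊u⌋ : ℝ)..u, hh x s‖ ≤ 1 * |u - ⌊u⌋| :=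
    intervalIntegral.norm_integral_le_of_norm_le_const (fun s _ => hh_bound hx s)
  rw [hsplit, h1, zero_add]
  have : |u - (⌊u⌋:ℝ)| ≤ 1 := by
    rw [abs_of_nonneg (by linarith [Int.floor_le u])]
    linarith [Int.lt_floor_add_one u]
  linarith [h2]

lemma hh_interval_bound {x : ℝ} (hx : x ∈ Set.Icc (0:ℝ) 1) {t : ℝ} (ht : 0 < t) (a b : ℝ) :
    ‖∫ y in a..b, hh x (t * y)‖ ≤ 2 / t := by
  rw [intervalIntegral.integral_comp_mul_left (hh x) (ne_of_gt ht)]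
  have hAB : ‖∫ u in (t*a)..(t*b), hh x u‖ ≤ 2 := by
    have : ∫ u in (t*a)..(t*b), hh x u
        = (∫ u in (0:ℝ)..(t*b), hh x u) - ∫ u in (0:ℝ)..(t*a), hh x u := by
      rw [← intervalIntegral.integral_add_adjacent_intervals (hh_intInt hx 0 (t*a))
        (hh_intInt hx (t*a) (t*b))]
      ring
    rw [this]
    calc ‖(∫ u in (0:ℝ)..(t*b), hh x u) - ∫ u in (0:ℝ)..(t*a), hh x u‖
        ≤ ‖∫ u in (0:ℝ)..(t*b), hh x u‖ + ‖∫ u in (0:ℝ)..(t*a), hh x u‖ := norm_sub_le _ _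
      _ ≤ 2 := by linarith [hh_H_bound hx (t*b), hh_H_bound hx (t*a)]
  rw [norm_smul]
  have : ‖t⁻¹‖ = 1 / t := by rw [Real.norm_eq_abs, abs_of_pos (inv_pos.2 ht), one_div]
  rw [this]
  calc 1 / t * ‖∫ u in (t*a)..(t*b), hh x u‖ ≤ 1 / t * 2 := by
        apply mul_le_mul_of_nonneg_left hAB (by positivity)
    _ = 2 / t := by ring

def PP (x : ℝ) (g : ℝ → ℝ) : Prop :=
  Tendsto (fun t : ℝ => ∫ y, hh x (t * y) * g y) atTop (nhds 0)

lemma hh_mul_integrable {x : ℝ} (hx : x ∈ Set.Icc (0:ℝ) 1) (t : ℝ) {g : ℝ → ℝ}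
    (hg : Integrable g) : Integrable (fun y => hh x (t * y) * g y) := by
  exact hg.bdd_mul (((hh_meas x).comp (measurable_const_mul t)).aestronglyMeasurable)
    (Filter.Eventually.of_forall (fun y => hh_bound hx _))

lemma hh_mul_integral_le {x : ℝ} (hx : x ∈ Set.Icc (0:ℝ) 1) (t : ℝ) {g : ℝ → ℝ}
    (hg : Integrable g) : ‖∫ y, hh x (t * y) * g y‖ ≤ ∫ y, ‖g y‖ := by
  calc ‖∫ y, hh x (t * y) * g y‖ ≤ ∫ y, ‖hh x (t * y) * g y‖ :=
        norm_integral_le_integral_norm _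
    _ ≤ ∫ y, ‖g y‖ := by
        apply integral_mono (hh_mul_integrable hx t hg).norm hg.norm
        intro y
        show ‖hh x (t*y) * g y‖ ≤ ‖g y‖
        rw [norm_mul]
        calc ‖hh x (t*y)‖ * ‖g y‖ ≤ 1 * ‖g y‖ :=
              mul_le_mul_of_nonneg_right (hh_bound hx _) (norm_nonneg _)
          _ = ‖g y‖ := one_mul _

lemma PP_of_approx {x : ℝ} (hx : x ∈ Set.Icc (0:ℝ) 1) {g : ℝ → ℝ} (hg : Integrable g)
    (H : ∀ ε > (0:ℝ), ∃ ψ : ℝ → ℝ, Integrable ψ ∧ PP x ψ ∧ ∫ y, ‖g y - ψ y‖ ≤ ε) :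
    PP x g := by
  rw [PP, NormedAddCommGroup.tendsto_nhds_zero]
  intro ε hε
  obtain ⟨ψ, hψi, hψP, hψε⟩ := H (ε/4) (by linarith)
  have hgψ : Integrable (fun y => g y - ψ y) := hg.sub hψi
  have h2 : ∀ᶠ t : ℝ in atTop, ‖∫ y, hh x (t * y) * ψ y‖ < ε/2 := by
    have := NormedAddCommGroup.tendsto_nhds_zero.1 hψP (ε/2) (by linarith)
    exact this
  filter_upwards [h2] with t ht
  have hsplit : ∫ y, hh x (t * y) * g y
      = (∫ y, hh x (t * y) * (g y - ψ y)) + ∫ y, hh x (t * y) * ψ y := by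
    rw [← integral_add (hh_mul_integrable hx t hgψ) (hh_mul_integrable hx t hψi)]
    congr 1; funext y; ring
  rw [hsplit]
  calc ‖(∫ y, hh x (t * y) * (g y - ψ y)) + ∫ y, hh x (t * y) * ψ y‖
      ≤ ‖∫ y, hh x (t * y) * (g y - ψ y)‖ + ‖∫ y, hh x (t * y) * ψ y‖ := norm_add_le _ _
    _ ≤ (∫ y, ‖g y - ψ y‖) + ‖∫ y, hh x (t * y) * ψ y‖ := by
        linarith [hh_mul_integral_le hx t hgψ]
    _ < ε/4 + ε/2 := by exact add_lt_add_of_le_of_lt hψε ht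
    _ < ε := by linarith

lemma PP_indicator {x : ℝ} (hx : x ∈ Set.Icc (0:ℝ) 1) (c a b : ℝ) (hab : a ≤ b) :
    PP x (Set.indicator (Set.Ico a b) fun _ => c) := by
  rw [PP]
  have heq : ∀ t : ℝ, ∫ y, hh x (t * y) * (Set.indicator (Set.Ico a b) fun _ => c) y
      = c * ∫ y in a..b, hh x (t * y) := by
    intro t
    have : (fun y => hh x (t * y) * (Set.indicator (Set.Ico a b) fun _ => c) y)
        = Set.indicator (Set.Ico a b) (fun y => hh x (t * y) * c) := by
      funext y
      by_cases hy : y ∈ Set.Ico a b <;> simp [hy, Set.indicator_of_mem, Set.indicator_of_notMem]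
    rw [this, integral_indicator measurableSet_Ico,
      MeasureTheory.integral_Ico_eq_integral_Ioo, ← MeasureTheory.integral_Ioc_eq_integral_Ioo,
      ← intervalIntegral.integral_of_le hab]
    rw [← intervalIntegral.integral_const_mul]
    congr 1; funext y; ring
  simp only [heq]
  have : Tendsto (fun t : ℝ => 2 / t * |c|) atTop (nhds 0) := by
    have h0 : Tendsto (fun t : ℝ => 2 / t) atTop (nhds 0) := by
      simpa [div_eq_mul_inv] using tendsto_inv_atTop_zero.const_mul (2:ℝ)
    simpa using h0.mul_const |c|
  apply squeeze_zero_norm' _ this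
  filter_upwards [eventually_gt_atTop (0:ℝ)] with t ht
  rw [norm_mul, mul_comm]
  exact mul_le_mul_of_nonneg_right (hh_interval_bound hx ht a b) (abs_nonneg c)

lemma PP_cont {x : ℝ} (hx : x ∈ Set.Icc (0:ℝ) 1) {φ : ℝ → ℝ}
    (hφc : Continuous φ) (hφs : HasCompactSupport φ) : PP x φ := by
  have hφint : Integrable φ := hφc.integrable_of_hasCompactSupport hφs
  apply PP_of_approx hx hφint
  intro ε hε
  -- support bound
  obtain ⟨R, hR⟩ := hφs.isBounded.subset_closedBall 0
  set S : ℝ := max R 0 + 1 with hS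
  have hS1 : (1:ℝ) ≤ S := by
    have : (0:ℝ) ≤ max R 0 := le_max_right _ _
    linarith
  have hS0 : (0:ℝ) < S := by linarith
  have hsupp : ∀ y, y ∉ Set.Ico (-S) S → φ y = 0 := by
    intro y hy
    apply image_eq_zero_of_notMem_tsupport
    intro hmem
    have := hR hmem
    rw [Real.closedBall_eq_Icc] at this
    simp only [zero_sub, zero_add, Set.mem_Icc] at this
    apply hy
    have hRm : R ≤ max R 0 := le_max_left _ _
    constructor
    · linarith [this.1]
    · linarith [this.2]
  -- uniform continuity
  have huc : UniformContinuous φ := hφs.uniformContinuous_of_continuous hφc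
  set ε' : ℝ := ε / (2 * S) with hε'
  have hε'pos : 0 < ε' := by positivity
  obtain ⟨δ, hδpos, hδ⟩ := Metric.uniformContinuous_iff.1 huc ε' hε'pos
  -- partition
  set N : ℕ := ⌈2 * S / δ⌉₊ + 1 with hN
  have hNpos : 0 < (N:ℝ) := by positivity
  set w : ℝ := 2 * S / N with hw
  have hwpos : 0 < w := by positivity
  have hwδ : w < δ := by
    rw [hw, div_lt_iff₀ hNpos]
    have h1 : 2 * S / δ < (N:ℝ) := by
      rw [hN]
      push_cast
      exact lt_of_le_of_lt (Nat.le_ceil _) (by linarith)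
    calc 2 * S = (2 * S / δ) * δ := by field_simp
      _ < (N:ℝ) * δ := by exact mul_lt_mul_of_pos_right h1 hδpos
      _ = δ * N := mul_comm _ _
  set p : ℕ → ℝ := fun k => -S + w * k with hp
  have hpmono : Monotone p := by
    intro i j hij
    simp only [hp]
    have : (i:ℝ) ≤ (j:ℝ) := Nat.cast_le.2 hij
    nlinarith
  have hpN : p N = S := by
    simp only [hp, hw]
    field_simp
    ring
  have hp0 : p 0 = -S := by simp [hp]
  set ψ : ℝ → ℝ := fun y =>
    ∑ k ∈ Finset.range N, Set.indicator (Set.Ico (p k) (p (k+1))) (fun _ => φ (p k)) y with hψ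
  have hpiece : ∀ k, Integrable (Set.indicator (Set.Ico (p k) (p (k+1))) fun _ => φ (p k)) := by
    intro k
    rw [integrable_indicator_iff measurableSet_Ico]
    exact integrableOn_const measure_Ico_lt_top.ne
  have hψint : Integrable ψ := by
    rw [hψ]
    exact integrable_finset_sum _ (fun k _ => hpiece k)
  refine ⟨ψ, hψint, ?_, ?_⟩
  · -- PP x ψ
    rw [PP]
    have heq : ∀ t : ℝ, ∫ y, hh x (t * y) * ψ y
        = ∑ k ∈ Finset.range N, ∫ y,
            hh x (t * y) * Set.indicator (Set.Ico (p k) (p (k+1))) (fun _ => φ (p k)) y := by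
      intro t
      rw [← integral_finset_sum _ (fun k _ => hh_mul_integrable hx t (hpiece k))]
      congr 1
      funext y
      simp only [hψ, Finset.mul_sum]
    simp only [heq]
    have h0 : (0:ℝ) = ∑ k ∈ Finset.range N, (0:ℝ) := by simp
    rw [h0]
    exact tendsto_finset_sum _ (fun k _ =>
      PP_indicator hx (φ (p k)) (p k) (p (k+1)) (hpmono (Nat.le_succ k)))
  · -- L¹ distance
    have hcover : ∀ y ∈ Set.Ico (-S) S, ∃ k, k < N ∧ y ∈ Set.Ico (p k) (p (k+1)) := by
      intro y hy
      set z : ℝ := (y + S) / w with hz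
      have hz0 : 0 ≤ z := by
        rw [hz]
        apply div_nonneg _ hwpos.le
        linarith [hy.1]
      refine ⟨⌊z⌋₊, ?_, ?_, ?_⟩
      · rw [Nat.floor_lt hz0, hz, div_lt_iff₀ hwpos]
        have : w * N = 2 * S := by rw [hw]; field_simp
        rw [mul_comm]
        rw [this]
        linarith [hy.2]
      · simp only [hp]
        have := Nat.floor_le hz0
        rw [hz, le_div_iff₀ hwpos] at this
        linarith [this]
      · simp only [hp]
        have := Nat.lt_floor_add_one z
        rw [hz, div_lt_iff₀ hwpos] at this
        push_cast
        nlinarith [this]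
    have hval : ∀ y k, k < N → y ∈ Set.Ico (p k) (p (k+1)) → ψ y = φ (p k) := by
      intro y k hk hyk
      simp only [hψ]
      rw [Finset.sum_eq_single_of_mem k (Finset.mem_range.2 hk)]
      · rw [Set.indicator_of_mem hyk]
      · intro j _ hjk
        apply Set.indicator_of_notMem
        intro hyj
        rcases lt_or_gt_of_ne hjk with h | h
        · have : p (j+1) ≤ p k := hpmono h
          exact absurd hyj.2 (not_lt.2 (le_trans this hyk.1))
        · have : p (k+1) ≤ p j := hpmono h
          exact absurd hyk.2 (not_lt.2 (le_trans this hyj.1))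
    have hptwise : ∀ y, ‖φ y - ψ y‖ ≤ Set.indicator (Set.Ico (-S) S) (fun _ => ε') y := by
      intro y
      by_cases hy : y ∈ Set.Ico (-S) S
      · rw [Set.indicator_of_mem hy]
        obtain ⟨k, hk, hyk⟩ := hcover y hy
        rw [hval y k hk hyk]
        have hdist : dist y (p k) < δ := by
          rw [Real.dist_eq, abs_of_nonneg (by linarith [hyk.1])]
          have : p (k+1) - p k = w := by simp only [hp]; push_cast; ring
          linarith [hyk.2, hyk.1, this, hwδ]
        exact le_of_lt (by simpa [Real.dist_eq] using hδ hdist)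
      · rw [Set.indicator_of_notMem hy, hsupp y hy]
        have : ψ y = 0 := by
          simp only [hψ]
          apply Finset.sum_eq_zero
          intro k hk
          apply Set.indicator_of_notMem
          intro hyk
          apply hy
          constructor
          · have : -S = p 0 := hp0.symm
            rw [this]
            exact le_trans (hpmono (Nat.zero_le k)) hyk.1
          · have hk' : k + 1 ≤ N := Finset.mem_range.1 hk
            calc y < p (k+1) := hyk.2
              _ ≤ p N := hpmono hk'
              _ = S := hpN
        rw [this]
        simp
    calc ∫ y, ‖φ y - ψ y‖
        ≤ ∫ y, Set.indicator (Set.Ico (-S) S) (fun _ => ε') y := by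
          apply integral_mono (hφint.sub hψint).norm _ hptwise
          rw [integrable_indicator_iff measurableSet_Ico]
          exact integrableOn_const measure_Ico_lt_top.ne
      _ = ε := by
          rw [integral_indicator measurableSet_Ico, setIntegral_const, measureReal_def, Real.volume_Ico]
          rw [smul_eq_mul, ENNReal.toReal_ofReal (by linarith)]
          rw [hε']
          field_simp
          ring


lemma PP_integrable {x : ℝ} (hx : x ∈ Set.Icc (0:ℝ) 1) {g : ℝ → ℝ} (hg : Integrable g) :
    Tendsto (fun t : ℝ => ∫ y, hh x (t * y) * g y) atTop (nhds 0) := by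
  have := PP_of_approx hx hg (fun ε hε => ?_)
  · exact this
  · obtain ⟨φ, hφs, hφe, hφc, hφi⟩ := hg.exists_hasCompactSupport_integral_sub_le hε
    exact ⟨φ, hφi, PP_cont hx hφc hφs, hφe⟩

/-- Equidistribution of the fractional part: if the real random variable `D` has an
integrable density with respect to Lebesgue measure, then `fract (t·D)` converges in
distribution to the uniform distribution on `[0,1]` as `t → ∞`: for every `x ∈ [0,1]`,
`ℙ(fract(t·D) ≤ x) → x`. -/
theorem fract_tendsto_uniform
    (Ω : Type) [MeasurableSpace Ω] (Pr : Measure Ω) [IsProbabilityMeasure Pr]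
    (D : Ω → ℝ) (hD : Measurable D) (f : ℝ → ℝ)
    (hf_int : Integrable f)
    (hf : Measure.map D Pr = volume.withDensity (fun x => ENNReal.ofReal (f x))) :
    ∀ x ∈ Set.Icc (0 : ℝ) 1,
      Tendsto (fun t : ℝ => (Pr {ω | Int.fract (t * D ω) ≤ x}).toReal)
        atTop (nhds x) := by
  intro x hx
  set g : ℝ → ℝ := fun y => max (f y) 0 with hgdef
  have hg_int : Integrable g := hf_int.pos_part
  have hg_nonneg : ∀ y, 0 ≤ g y := fun y => le_max_right _ _
  have hofReal : ∀ y, ENNReal.ofReal (f y) = ENNReal.ofReal (g y) := by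
    intro y
    rcases le_total (f y) 0 with h | h
    · rw [ENNReal.ofReal_of_nonpos h, hgdef]
      simp [max_eq_right h]
    · rw [hgdef]; simp [max_eq_left h]
  have hS : ∀ t : ℝ, MeasurableSet {y : ℝ | Int.fract (t * y) ≤ x} := fun t =>
    measurableSet_le (measurable_fract.comp (measurable_const_mul t)) measurable_const
  have hmap : ∀ t : ℝ, (Pr {ω | Int.fract (t * D ω) ≤ x}).toReal
      = ∫ y in {y : ℝ | Int.fract (t * y) ≤ x}, g y := by
    intro t
    have h1 : Pr {ω | Int.fract (t * D ω) ≤ x}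
        = Measure.map D Pr {y : ℝ | Int.fract (t * y) ≤ x} := by
      rw [Measure.map_apply hD (hS t)]
      rfl
    rw [h1, hf, withDensity_apply _ (hS t)]
    have h2 : ∫⁻ y in {y : ℝ | Int.fract (t * y) ≤ x}, ENNReal.ofReal (f y)
        = ∫⁻ y in {y : ℝ | Int.fract (t * y) ≤ x}, ENNReal.ofReal (g y) := by
      apply lintegral_congr (fun y => hofReal y)
    rw [h2, ← MeasureTheory.ofReal_integral_eq_lintegral_ofReal
      (hg_int.restrict) (Filter.Eventually.of_forall hg_nonneg),
      ENNReal.toReal_ofReal (integral_nonneg hg_nonneg)]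
  have htotal : ∫ y, g y = 1 := by
    have h1 : Measure.map D Pr Set.univ = 1 := by
      rw [Measure.map_apply hD MeasurableSet.univ]
      simp
    rw [hf] at h1
    rw [withDensity_apply _ MeasurableSet.univ, Measure.restrict_univ] at h1
    have h2 : ∫⁻ y, ENNReal.ofReal (f y) = ∫⁻ y, ENNReal.ofReal (g y) :=
      lintegral_congr (fun y => hofReal y)
    rw [h2, ← MeasureTheory.ofReal_integral_eq_lintegral_ofReal hg_int
      (Filter.Eventually.of_forall hg_nonneg)] at h1
    have := congrArg ENNReal.toReal h1
    rw [ENNReal.toReal_ofReal (integral_nonneg hg_nonneg)] at this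
    simpa using this
  have hrel : ∀ t : ℝ, ∫ y, hh x (t * y) * g y
      = (∫ y in {y : ℝ | Int.fract (t * y) ≤ x}, g y) - x := by
    intro t
    have hint1 : Integrable ({y : ℝ | Int.fract (t * y) ≤ x}.indicator g) :=
      hg_int.indicator (hS t)
    have hint2 : Integrable (fun y => x * g y) := hg_int.const_mul x
    have heq : (fun y => hh x (t * y) * g y)
        = fun y => ({y : ℝ | Int.fract (t * y) ≤ x}.indicator g) y - x * g y := by
      funext y
      by_cases hy : Int.fract (t * y) ≤ x
      · rw [Set.indicator_of_mem (show y ∈ {y:ℝ | Int.fract (t*y) ≤ x} from hy) g]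
        simp only [hh, if_pos hy]
        ring
      · rw [Set.indicator_of_notMem (show y ∉ {y:ℝ | Int.fract (t*y) ≤ x} from hy) g]
        simp only [hh, if_neg hy]
        ring
    rw [heq, integral_sub hint1 hint2, integral_indicator (hS t),
      integral_const_mul, htotal]
    ring
  have hfinal := (PP_integrable hx hg_int).add_const x
  rw [zero_add] at hfinal
  apply hfinal.congr
  intro t
  rw [hrel t, hmap t]
  ring
end

section
/- Let N ∈ ℕ, let M be an N × N Hermitian positive semidefinite complex matrix, let R and S be N × N Hermitian positive definite complex matrices, and let t ∈ [0, 1]. Then all the determinants below are positive real numbers and ln det(tR + (1−t)S + M) − ln det(tR + (1−t)S) ≤ t·(ln det(R + M) − ln det(R)) + (1−t)·(ln det(S + M) − ln det(S)); that is, the map R ↦ ln det(R + M) − ln det(R) is convex on the cone of Hermitian positive definite matrices. -/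
open Matrix
open scoped ComplexOrder

namespace LogDetAux

/-- Hölder-type inequality with an extra `1` term. -/
lemma hoelder_one {ι : Type*} (s : Finset ι) (x y : ι → ℝ) (t : ℝ)
    (hx : ∀ i ∈ s, 0 ≤ x i) (hy : ∀ i ∈ s, 0 ≤ y i) (ht0 : 0 ≤ t) (ht1 : t ≤ 1) :
    1 + ∑ i ∈ s, x i ^ t * y i ^ (1 - t)
      ≤ (1 + ∑ i ∈ s, x i) ^ t * (1 + ∑ i ∈ s, y i) ^ (1 - t) := by
  have hsx : 0 ≤ ∑ i ∈ s, x i := Finset.sum_nonneg hx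
  have hsy : 0 ≤ ∑ i ∈ s, y i := Finset.sum_nonneg hy
  set X := 1 + ∑ i ∈ s, x i with hXdef
  set Y := 1 + ∑ i ∈ s, y i with hYdef
  have hX : 0 < X := by rw [hXdef]; linarith
  have hY : 0 < Y := by rw [hYdef]; linarith
  have key : ∀ u v : ℝ, 0 ≤ u → 0 ≤ v →
      u ^ t * v ^ (1 - t) ≤ (t * (u / X) + (1 - t) * (v / Y)) * (X ^ t * Y ^ (1 - t)) := by
    intro u v hu hv
    have h1 : (u / X) ^ t * (v / Y) ^ (1 - t) ≤ t * (u / X) + (1 - t) * (v / Y) :=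
      Real.geom_mean_le_arith_mean2_weighted ht0 (by linarith) (by positivity) (by positivity)
        (by ring)
    have h2 : (0:ℝ) ≤ X ^ t * Y ^ (1 - t) := by positivity
    calc u ^ t * v ^ (1 - t)
        = ((u / X) ^ t * (v / Y) ^ (1 - t)) * (X ^ t * Y ^ (1 - t)) := by
          rw [Real.div_rpow hu hX.le, Real.div_rpow hv hY.le]
          have hXt : (0:ℝ) < X ^ t := Real.rpow_pos_of_pos hX t
          have hYt : (0:ℝ) < Y ^ (1 - t) := Real.rpow_pos_of_pos hY (1 - t)
          field_simp
      _ ≤ (t * (u / X) + (1 - t) * (v / Y)) * (X ^ t * Y ^ (1 - t)) :=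
          mul_le_mul_of_nonneg_right h1 h2
  have hx1 : ∑ i ∈ s, x i = X - 1 := by rw [hXdef]; ring
  have hy1 : ∑ i ∈ s, y i = Y - 1 := by rw [hYdef]; ring
  calc 1 + ∑ i ∈ s, x i ^ t * y i ^ (1 - t)
      ≤ (t * (1 / X) + (1 - t) * (1 / Y)) * (X ^ t * Y ^ (1 - t))
        + ∑ i ∈ s, (t * (x i / X) + (1 - t) * (y i / Y)) * (X ^ t * Y ^ (1 - t)) := by
        refine add_le_add ?_ (Finset.sum_le_sum fun i hi => key _ _ (hx i hi) (hy i hi))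
        have := key 1 1 zero_le_one zero_le_one
        simpa using this
    _ = (t * (1 / X) + (1 - t) * (1 / Y)
          + ∑ i ∈ s, (t * (x i / X) + (1 - t) * (y i / Y))) * (X ^ t * Y ^ (1 - t)) := by
        rw [← Finset.sum_mul, ← add_mul]
    _ = X ^ t * Y ^ (1 - t) := by
        have hsum : ∑ i ∈ s, (t * (x i / X) + (1 - t) * (y i / Y))
            = t * ((X - 1) / X) + (1 - t) * ((Y - 1) / Y) := by
          rw [Finset.sum_add_distrib]
          rw [← Finset.mul_sum, ← Finset.mul_sum, ← Finset.sum_div, ← Finset.sum_div, hx1, hy1]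
        rw [hsum]
        have : t * (1 / X) + (1 - t) * (1 / Y)
            + (t * ((X - 1) / X) + (1 - t) * ((Y - 1) / Y)) = 1 := by
          field_simp
          ring
        rw [this, one_mul]

/-- The key scalar inequality. -/
lemma scalar_key {ι : Type*} (s : Finset ι) (a d : ι → ℝ) (ha : ∀ i ∈ s, 0 ≤ a i)
    (hd : ∀ i ∈ s, 0 < d i) (t : ℝ) (ht0 : 0 ≤ t) (ht1 : t ≤ 1) :
    1 + ∑ i ∈ s, a i / (t + (1 - t) * d i)
      ≤ (1 + ∑ i ∈ s, a i) ^ t * (1 + ∑ i ∈ s, a i / d i) ^ (1 - t) := by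
  have hsx : 0 ≤ ∑ i ∈ s, a i := Finset.sum_nonneg ha
  have hsy : 0 ≤ ∑ i ∈ s, a i / d i :=
    Finset.sum_nonneg fun i hi => div_nonneg (ha i hi) (hd i hi).le
  rcases eq_or_lt_of_le ht0 with h0 | h0
  · rw [← h0]
    simp
  rcases eq_or_lt_of_le ht1 with h1 | h1
  · rw [h1]
    simp
  have key : ∀ i ∈ s, a i / (t + (1 - t) * d i) ≤ a i ^ t * (a i / d i) ^ (1 - t) := by
    intro i hi
    have hdi := hd i hi
    have hden : 0 < t + (1 - t) * d i := by nlinarith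
    have hgm : d i ^ (1 - t) ≤ t + (1 - t) * d i := by
      have := Real.geom_mean_le_arith_mean2_weighted (w₁ := t) (w₂ := 1 - t) (p₁ := 1)
        (p₂ := d i) ht0 (by linarith) zero_le_one hdi.le (by ring)
      simpa using this
    have hstep : a i / (t + (1 - t) * d i) ≤ a i / d i ^ (1 - t) := by
      gcongr
      exact ha i hi
    refine hstep.trans (le_of_eq ?_)
    rcases eq_or_lt_of_le (ha i hi) with ha0 | ha0
    · rw [← ha0]
      simp [Real.zero_rpow h0.ne']
    · rw [Real.div_rpow ha0.le hdi.le, ← mul_div_assoc, ← Real.rpow_add ha0]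
      norm_num
  calc 1 + ∑ i ∈ s, a i / (t + (1 - t) * d i)
      ≤ 1 + ∑ i ∈ s, a i ^ t * (a i / d i) ^ (1 - t) :=
        add_le_add_right (Finset.sum_le_sum key) 1
    _ ≤ _ := hoelder_one s a (fun i => a i / d i) t ha
        (fun i hi => div_nonneg (ha i hi) (hd i hi).le) ht0 ht1

variable {n : Type*} [Fintype n] [DecidableEq n]

lemma cpos {z : ℂ} (h : 0 < z) : 0 < z.re ∧ z.im = 0 := by
  rw [Complex.lt_def] at h
  obtain ⟨h1, h2⟩ := h
  exact ⟨by simpa using h1, by simpa using h2.symm⟩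

lemma cnonneg {z : ℂ} (h : 0 ≤ z) : 0 ≤ z.re ∧ z.im = 0 := by
  rw [Complex.le_def] at h
  obtain ⟨h1, h2⟩ := h
  exact ⟨by simpa using h1, by simpa using h2.symm⟩

lemma posDef_of_psd_isUnit {A : Matrix n n ℂ} (hA : A.PosSemidef) (h : IsUnit A.det) :
    A.PosDef := by
  refine posDef_iff_dotProduct_mulVec.mpr ⟨hA.1, fun x hx => ?_⟩
  refine lt_of_le_of_ne (hA.dotProduct_mulVec_nonneg x) (Ne.symm ?_)
  intro h0
  have hAx : A *ᵥ x = 0 := (hA.dotProduct_mulVec_zero_iff x).mp h0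
  have hinj : Function.Injective A.mulVec :=
    mulVec_injective_iff_isUnit.mpr ((isUnit_iff_isUnit_det _).mpr h)
  exact hx (hinj (by simpa using hAx))

lemma posDef_conj {A : Matrix n n ℂ} (hA : A.PosDef) (P : Matrix n n ℂ) (hP : IsUnit P.det) :
    (Pᴴ * A * P).PosDef := by
  refine posDef_iff_dotProduct_mulVec.mpr ⟨?_, fun x hx => ?_⟩
  · have h1 : (Pᴴ * A * P)ᴴ = Pᴴ * Aᴴ * P := by
      rw [conjTranspose_mul, conjTranspose_mul, conjTranspose_conjTranspose, Matrix.mul_assoc]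
    rw [Matrix.IsHermitian, h1, hA.1.eq]
  · have hPx : P *ᵥ x ≠ 0 := by
      intro h0
      exact hx ((mulVec_injective_iff_isUnit.mpr ((isUnit_iff_isUnit_det _).mpr hP))
        (by simpa using h0))
    have := hA.dotProduct_mulVec_pos hPx
    rwa [star_mulVec, ← dotProduct_mulVec, mulVec_mulVec, mulVec_mulVec] at this

lemma posDef_combo {R S : Matrix n n ℂ} (hR : R.PosDef) (hS : S.PosDef) {t : ℝ}
    (ht0 : 0 ≤ t) (ht1 : t ≤ 1) : ((t : ℂ) • R + ((1 - t : ℝ) : ℂ) • S).PosDef := by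
  refine posDef_iff_dotProduct_mulVec.mpr ⟨?_, ?_⟩
  · have h1 : ((t : ℂ) • R + ((1 - t : ℝ) : ℂ) • S)ᴴ
        = star (t : ℂ) • Rᴴ + star ((1 - t : ℝ) : ℂ) • Sᴴ := by
      rw [conjTranspose_add, conjTranspose_smul, conjTranspose_smul]
    rw [Matrix.IsHermitian, h1, hR.1.eq, hS.1.eq]
    simp [Complex.star_def, Complex.conj_ofReal]
  · intro x hx
    have haR := cpos (hR.dotProduct_mulVec_pos hx)
    have haS := cpos (hS.dotProduct_mulVec_pos hx)
    rw [add_mulVec, smul_mulVec, smul_mulVec, dotProduct_add, dotProduct_smul,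
      dotProduct_smul]
    rw [Complex.lt_def]
    constructor
    · simp only [smul_eq_mul, Complex.add_re, Complex.mul_re, Complex.ofReal_re,
        Complex.ofReal_im, Complex.add_im, Complex.mul_im, haR.2, haS.2, zero_mul, mul_zero,
        sub_zero, Complex.zero_re]
      rcases lt_or_eq_of_le ht0 with h | h
      · nlinarith [haR.1, haS.1, mul_pos h haR.1,
          mul_nonneg (by linarith : (0:ℝ) ≤ 1 - t) haS.1.le]
      · rw [← h]
        simpa using haS.1
    · simp only [smul_eq_mul, Complex.add_im, Complex.mul_im, Complex.ofReal_re,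
        Complex.ofReal_im, haR.2, haS.2, zero_mul, mul_zero, add_zero, Complex.zero_im]

lemma posSemidef_vecMulVec_star (v : n → ℂ) : (vecMulVec v (star v)).PosSemidef := by
  rw [vecMulVec_eq Unit, ← conjTranspose_replicateCol]
  exact posSemidef_self_mul_conjTranspose _

lemma posSemidef_sum {ι : Type*} (s : Finset ι) (f : ι → Matrix n n ℂ)
    (h : ∀ i ∈ s, (f i).PosSemidef) : (∑ i ∈ s, f i).PosSemidef :=
  Finset.sum_induction f _ (fun _ _ ha hb => ha.add hb) .zero h

lemma det_add_vecMulVec {A : Matrix n n ℂ} (hA : IsUnit A.det) (v : n → ℂ) :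
    (A + vecMulVec v (star v)).det = A.det * (1 + star v ⬝ᵥ A⁻¹ *ᵥ v) := by
  rw [vecMulVec_eq Unit, det_add_replicateCol_mul_replicateRow (ι := Unit) hA, Matrix.mul_assoc,
    ← replicateCol_mulVec (ι := Unit)]
  congr 1
  rw [det_unique]
  simp [replicateRow_mul_replicateCol_apply]

lemma quad_nonneg {A : Matrix n n ℂ} (hA : A.PosDef) (v : n → ℂ) :
    0 ≤ (star v ⬝ᵥ A⁻¹ *ᵥ v).re ∧ (star v ⬝ᵥ A⁻¹ *ᵥ v).im = 0 :=
  cnonneg (hA.inv.posSemidef.dotProduct_mulVec_nonneg v)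

lemma logdet_rank_one {A : Matrix n n ℂ} (hA : A.PosDef) (v : n → ℂ) :
    Real.log ((A + vecMulVec v (star v)).det).re
      = Real.log (A.det).re + Real.log (1 + (star v ⬝ᵥ A⁻¹ *ᵥ v).re) := by
  have hdet := cpos hA.det_pos
  have hq := quad_nonneg hA v
  rw [det_add_vecMulVec hA.det_pos.ne'.isUnit v]
  have h2 : (A.det * (1 + star v ⬝ᵥ A⁻¹ *ᵥ v)).re
      = A.det.re * (1 + (star v ⬝ᵥ A⁻¹ *ᵥ v).re) := by
    simp [Complex.mul_re, Complex.add_im, hdet.2, hq.2]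
  rw [h2, Real.log_mul hdet.1.ne' (by nlinarith [hq.1])]

lemma quad_conj {A : Matrix n n ℂ} (P : Matrix n n ℂ) (hA : IsUnit A.det)
    (hP : IsUnit P.det) (v : n → ℂ) :
    star v ⬝ᵥ A⁻¹ *ᵥ v = star (Pᴴ *ᵥ v) ⬝ᵥ (Pᴴ * A * P)⁻¹ *ᵥ (Pᴴ *ᵥ v) := by
  have hPH : IsUnit (Pᴴ).det := by
    rw [det_conjTranspose]
    exact hP.star
  rw [Matrix.mul_inv_rev, Matrix.mul_inv_rev, star_mulVec, conjTranspose_conjTranspose]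
  rw [mulVec_mulVec]
  have hmat : P⁻¹ * (A⁻¹ * Pᴴ⁻¹) * Pᴴ = P⁻¹ * A⁻¹ := by
    rw [Matrix.mul_assoc P⁻¹, Matrix.mul_assoc A⁻¹, Matrix.nonsing_inv_mul _ hPH,
      Matrix.mul_one]
  rw [hmat]
  conv_rhs => rw [dotProduct_mulVec, vecMul_vecMul, Matrix.mul_nonsing_inv_cancel_left _ _ hP,
    ← dotProduct_mulVec]

lemma quad_diag (e : n → ℝ) (he : ∀ i, e i ≠ 0) (w : n → ℂ) :
    (star w ⬝ᵥ (diagonal (fun i => ((e i : ℝ) : ℂ)))⁻¹ *ᵥ w).re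
      = ∑ i, Complex.normSq (w i) / e i := by
  have hdiag : (diagonal (fun i => ((e i : ℝ) : ℂ)))⁻¹
      = diagonal (fun i => (((e i)⁻¹ : ℝ) : ℂ)) := by
    apply Matrix.inv_eq_right_inv
    rw [diagonal_mul_diagonal]
    have h1 : (fun i => ((e i : ℝ) : ℂ) * (((e i)⁻¹ : ℝ) : ℂ)) = fun _ => (1 : ℂ) := by
      funext i
      have hei : ((e i : ℝ) : ℂ) ≠ 0 := by simpa using he i
      push_cast
      field_simp
    rw [h1, diagonal_one]
  rw [hdiag]
  have hterm : ∀ i, (star (w i) * ((((e i)⁻¹ : ℝ) : ℂ) * w i)).re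
      = Complex.normSq (w i) / e i := by
    intro i
    have h1 : star (w i) * ((((e i)⁻¹ : ℝ) : ℂ) * w i)
        = ((((e i)⁻¹ * Complex.normSq (w i)) : ℝ) : ℂ) := by
      rw [Complex.star_def]
      rw [show (starRingEnd ℂ) (w i) * ((((e i)⁻¹ : ℝ) : ℂ) * w i)
          = (((e i)⁻¹ : ℝ) : ℂ) * (w i * (starRingEnd ℂ) (w i)) by ring, Complex.mul_conj]
      push_cast
      ring
    rw [h1, Complex.ofReal_re, inv_mul_eq_div]
  rw [dotProduct, Complex.re_sum]
  refine Finset.sum_congr rfl fun i _ => ?_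
  rw [mulVec_diagonal]
  exact hterm i

open scoped MatrixOrder in
lemma quad_combo_le {R S : Matrix n n ℂ} (hR : R.PosDef) (hS : S.PosDef) (v : n → ℂ)
    {t : ℝ} (ht0 : 0 ≤ t) (ht1 : t ≤ 1) :
    1 + (star v ⬝ᵥ ((t : ℂ) • R + ((1 - t : ℝ) : ℂ) • S)⁻¹ *ᵥ v).re
      ≤ (1 + (star v ⬝ᵥ R⁻¹ *ᵥ v).re) ^ t * (1 + (star v ⬝ᵥ S⁻¹ *ᵥ v).re) ^ (1 - t) := by
  classical
  have hCpd : ((t : ℂ) • R + ((1 - t : ℝ) : ℂ) • S).PosDef := posDef_combo hR hS ht0 ht1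
  set C := (t : ℂ) • R + ((1 - t : ℝ) : ℂ) • S with hCdef
  -- square root of R
  have hRps : R.PosSemidef := hR.posSemidef
  set T := CFC.sqrt R with hTdef
  have hTps : T.PosSemidef := (CFC.sqrt_nonneg R).posSemidef
  have hTT : T * T = R := CFC.sqrt_mul_sqrt_self R hRps.nonneg
  have hTdet : IsUnit T.det := by
    have hmul : T.det * T.det = R.det := by rw [← det_mul, hTT]
    have hRdet : R.det ≠ 0 := hR.det_pos.ne'
    exact isUnit_iff_ne_zero.mpr fun h => hRdet (by rw [← hmul, h, zero_mul])
  have hT : T.PosDef := posDef_of_psd_isUnit hTps hTdet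
  have hTinv : T⁻¹.PosDef := hT.inv
  have hTinvH : (T⁻¹)ᴴ = T⁻¹ := hTinv.1
  have hTinvdet : IsUnit (T⁻¹).det := hTinv.det_pos.ne'.isUnit
  -- diagonalize G
  set G := T⁻¹ * S * T⁻¹ with hGdef
  have hGpd : G.PosDef := by
    have h := posDef_conj hS (T⁻¹) hTinvdet
    rwa [hTinvH] at h
  have hGH : G.IsHermitian := hGpd.1
  set U : Matrix n n ℂ := (hGH.eigenvectorUnitary : Matrix n n ℂ) with hUdef
  set d : n → ℝ := hGH.eigenvalues with hddef
  have hd : ∀ i, 0 < d i := hGpd.eigenvalues_pos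
  have hspec : G = U * diagonal (fun i => ((d i : ℝ) : ℂ)) * Uᴴ := by
    have h := hGH.spectral_theorem
    rwa [Unitary.conjStarAlgAut_apply, star_eq_conjTranspose] at h
  have hUU : Uᴴ * U = 1 := by
    have h := mem_unitaryGroup_iff'.mp hGH.eigenvectorUnitary.2
    rwa [star_eq_conjTranspose] at h
  have hUUc : U * Uᴴ = 1 := by
    have h := mem_unitaryGroup_iff.mp hGH.eigenvectorUnitary.2
    rwa [star_eq_conjTranspose] at h
  have hUdet : IsUnit U.det := IsUnit.of_mul_eq_one (Uᴴ).det (by rw [← det_mul, hUUc, det_one])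
  set P := T⁻¹ * U with hPdef
  have hPH : Pᴴ = Uᴴ * T⁻¹ := by rw [hPdef, conjTranspose_mul, hTinvH]
  have hPdet : IsUnit P.det := by
    rw [hPdef, det_mul]
    exact hTinvdet.mul hUdet
  -- the three congruence identities
  have hIdR : Pᴴ * R * P = 1 := by
    rw [hPH, hPdef, ← hTT]
    simp only [Matrix.mul_assoc]
    rw [Matrix.mul_nonsing_inv_cancel_left _ _ hTdet, Matrix.nonsing_inv_mul_cancel_left _ _ hTdet,
      hUU]
  have hIdS : Pᴴ * S * P = diagonal (fun i => ((d i : ℝ) : ℂ)) := by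
    rw [hPH, hPdef]
    have h1 : Uᴴ * T⁻¹ * S * (T⁻¹ * U) = Uᴴ * G * U := by
      rw [hGdef]
      simp only [Matrix.mul_assoc]
    rw [h1, hspec]
    simp only [Matrix.mul_assoc]
    rw [hUU, Matrix.mul_one, ← Matrix.mul_assoc, hUU, Matrix.one_mul]
  have hIdC : Pᴴ * C * P = diagonal (fun i => ((t + (1 - t) * d i : ℝ) : ℂ)) := by
    have h1 : Pᴴ * C * P = (t : ℂ) • (Pᴴ * R * P) + ((1 - t : ℝ) : ℂ) • (Pᴴ * S * P) := by
      rw [hCdef]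
      rw [Matrix.mul_add, Matrix.add_mul, Matrix.mul_smul, Matrix.smul_mul, Matrix.mul_smul,
        Matrix.smul_mul]
    rw [h1, hIdR, hIdS, ← diagonal_one, ← diagonal_smul, ← diagonal_smul, diagonal_add]
    refine congrArg diagonal (funext fun i => ?_)
    simp only [Pi.add_apply, Pi.smul_apply, Pi.one_apply, smul_eq_mul]
    push_cast
    ring
  -- transfer quadratic forms
  set w := Pᴴ *ᵥ v with hwdef
  set a : n → ℝ := fun i => Complex.normSq (w i) with hadef
  have ha : ∀ i, 0 ≤ a i := fun i => Complex.normSq_nonneg _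
  have hqR : (star v ⬝ᵥ R⁻¹ *ᵥ v).re = ∑ i, a i / 1 := by
    rw [quad_conj P hR.det_pos.ne'.isUnit hPdet v, hIdR, ← hwdef]
    have h1 : (1 : Matrix n n ℂ) = diagonal (fun i => (((1 : ℝ) : ℝ) : ℂ)) := by
      rw [← diagonal_one]
      norm_num
    rw [h1, quad_diag (fun _ => (1 : ℝ)) (fun _ => one_ne_zero) w]
  have hqS : (star v ⬝ᵥ S⁻¹ *ᵥ v).re = ∑ i, a i / d i := by
    rw [quad_conj P hS.det_pos.ne'.isUnit hPdet v, hIdS, ← hwdef]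
    rw [quad_diag d (fun i => (hd i).ne') w]
  have hden : ∀ i, 0 < t + (1 - t) * d i := by
    intro i
    rcases eq_or_lt_of_le ht0 with h | h
    · rw [← h]
      simpa using hd i
    · nlinarith [mul_nonneg (sub_nonneg.mpr ht1) (hd i).le]
  have hqC : (star v ⬝ᵥ C⁻¹ *ᵥ v).re = ∑ i, a i / (t + (1 - t) * d i) := by
    rw [quad_conj P hCpd.det_pos.ne'.isUnit hPdet v, hIdC, ← hwdef]
    rw [quad_diag (fun i => t + (1 - t) * d i) (fun i => (hden i).ne') w]
  rw [hqR, hqS, hqC]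
  have := scalar_key Finset.univ a d (fun i _ => ha i) (fun i _ => hd i) t ht0 ht1
  simpa using this

lemma log_step {R S : Matrix n n ℂ} (hR : R.PosDef) (hS : S.PosDef) (v : n → ℂ)
    {t : ℝ} (ht0 : 0 ≤ t) (ht1 : t ≤ 1) :
    Real.log (1 + (star v ⬝ᵥ ((t : ℂ) • R + ((1 - t : ℝ) : ℂ) • S)⁻¹ *ᵥ v).re)
      ≤ t * Real.log (1 + (star v ⬝ᵥ R⁻¹ *ᵥ v).re)
        + (1 - t) * Real.log (1 + (star v ⬝ᵥ S⁻¹ *ᵥ v).re) := by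
  have hqR := (quad_nonneg hR v).1
  have hqS := (quad_nonneg hS v).1
  have hqC := (quad_nonneg (posDef_combo hR hS ht0 ht1) v).1
  have h1R : (0:ℝ) < 1 + (star v ⬝ᵥ R⁻¹ *ᵥ v).re := by linarith
  have h1S : (0:ℝ) < 1 + (star v ⬝ᵥ S⁻¹ *ᵥ v).re := by linarith
  have h1C : (0:ℝ) < 1 + (star v ⬝ᵥ ((t : ℂ) • R + ((1 - t : ℝ) : ℂ) • S)⁻¹ *ᵥ v).re := by
    linarith
  calc Real.log (1 + (star v ⬝ᵥ ((t : ℂ) • R + ((1 - t : ℝ) : ℂ) • S)⁻¹ *ᵥ v).re)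
      ≤ Real.log ((1 + (star v ⬝ᵥ R⁻¹ *ᵥ v).re) ^ t
          * (1 + (star v ⬝ᵥ S⁻¹ *ᵥ v).re) ^ (1 - t)) :=
        Real.log_le_log h1C (quad_combo_le hR hS v ht0 ht1)
    _ = t * Real.log (1 + (star v ⬝ᵥ R⁻¹ *ᵥ v).re)
        + (1 - t) * Real.log (1 + (star v ⬝ᵥ S⁻¹ *ᵥ v).re) := by
        rw [Real.log_mul (Real.rpow_pos_of_pos h1R t).ne' (Real.rpow_pos_of_pos h1S (1 - t)).ne',
          Real.log_rpow h1R, Real.log_rpow h1S]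

lemma main_ind {R S : Matrix n n ℂ} (hR : R.PosDef) (hS : S.PosDef) {t : ℝ}
    (ht0 : 0 ≤ t) (ht1 : t ≤ 1) {ι : Type*} [DecidableEq ι] (u : ι → (n → ℂ)) (s : Finset ι) :
    Real.log (((t : ℂ) • R + ((1 - t : ℝ) : ℂ) • S
          + ∑ i ∈ s, vecMulVec (u i) (star (u i))).det).re
        - Real.log (((t : ℂ) • R + ((1 - t : ℝ) : ℂ) • S).det).re
      ≤ t * (Real.log ((R + ∑ i ∈ s, vecMulVec (u i) (star (u i))).det).re
            - Real.log (R.det).re)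
        + (1 - t) * (Real.log ((S + ∑ i ∈ s, vecMulVec (u i) (star (u i))).det).re
            - Real.log (S.det).re) := by
  classical
  induction s using Finset.induction with
  | empty => simp
  | @insert b s hb ih =>
    have hMs : (∑ i ∈ s, vecMulVec (u i) (star (u i))).PosSemidef :=
      posSemidef_sum s _ (fun i _ => posSemidef_vecMulVec_star (u i))
    have hRs : (R + ∑ i ∈ s, vecMulVec (u i) (star (u i))).PosDef := hR.add_posSemidef hMs
    have hSs : (S + ∑ i ∈ s, vecMulVec (u i) (star (u i))).PosDef := hS.add_posSemidef hMs
    have hCs : ((t : ℂ) • R + ((1 - t : ℝ) : ℂ) • S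
        + ∑ i ∈ s, vecMulVec (u i) (star (u i))).PosDef :=
      (posDef_combo hR hS ht0 ht1).add_posSemidef hMs
    have hcombo : (t : ℂ) • (R + ∑ i ∈ s, vecMulVec (u i) (star (u i)))
        + ((1 - t : ℝ) : ℂ) • (S + ∑ i ∈ s, vecMulVec (u i) (star (u i)))
        = (t : ℂ) • R + ((1 - t : ℝ) : ℂ) • S + ∑ i ∈ s, vecMulVec (u i) (star (u i)) := by
      rw [smul_add, smul_add, add_add_add_comm, ← add_smul,
        show (t : ℂ) + ((1 - t : ℝ) : ℂ) = 1 by push_cast; ring, one_smul]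
    have hstep := log_step hRs hSs (u b) ht0 ht1
    rw [hcombo] at hstep
    rw [Finset.sum_insert hb]
    have hmC : (t : ℂ) • R + ((1 - t : ℝ) : ℂ) • S
        + (vecMulVec (u b) (star (u b)) + ∑ i ∈ s, vecMulVec (u i) (star (u i)))
        = ((t : ℂ) • R + ((1 - t : ℝ) : ℂ) • S + ∑ i ∈ s, vecMulVec (u i) (star (u i)))
          + vecMulVec (u b) (star (u b)) := by abel
    have hmR : R + (vecMulVec (u b) (star (u b)) + ∑ i ∈ s, vecMulVec (u i) (star (u i)))
        = (R + ∑ i ∈ s, vecMulVec (u i) (star (u i))) + vecMulVec (u b) (star (u b)) := by abel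
    have hmS : S + (vecMulVec (u b) (star (u b)) + ∑ i ∈ s, vecMulVec (u i) (star (u i)))
        = (S + ∑ i ∈ s, vecMulVec (u i) (star (u i))) + vecMulVec (u b) (star (u b)) := by abel
    rw [hmC, hmR, hmS, logdet_rank_one hCs (u b), logdet_rank_one hRs (u b),
      logdet_rank_one hSs (u b)]
    linarith [ih]

end LogDetAux

open LogDetAux in
/-- Convexity of `R ↦ ln det(R + M) - ln det R` on Hermitian positive definite
matrices: for `M` positive semidefinite, `R, S` positive definite and `t ∈ [0,1]`, all
the determinants are positive reals and
`ln det(tR+(1-t)S+M) - ln det(tR+(1-t)S) ≤ t (ln det(R+M) - ln det R) + (1-t)(ln det(S+M) - ln det S)`. -/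
theorem logdet_diff_convex (N : ℕ) (M R S : Matrix (Fin N) (Fin N) ℂ)
    (hM : M.PosSemidef) (hR : R.PosDef) (hS : S.PosDef)
    (t : ℝ) (ht : t ∈ Set.Icc (0 : ℝ) 1) :
    (0 < (R.det).re ∧ (R.det).im = 0) ∧
    (0 < (S.det).re ∧ (S.det).im = 0) ∧
    (0 < ((R + M).det).re ∧ ((R + M).det).im = 0) ∧
    (0 < ((S + M).det).re ∧ ((S + M).det).im = 0) ∧
    (0 < (((t : ℂ) • R + ((1 - t : ℝ) : ℂ) • S).det).re ∧
      (((t : ℂ) • R + ((1 - t : ℝ) : ℂ) • S).det).im = 0) ∧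
    (0 < (((t : ℂ) • R + ((1 - t : ℝ) : ℂ) • S + M).det).re ∧
      (((t : ℂ) • R + ((1 - t : ℝ) : ℂ) • S + M).det).im = 0) ∧
    Real.log (((t : ℂ) • R + ((1 - t : ℝ) : ℂ) • S + M).det).re
        - Real.log (((t : ℂ) • R + ((1 - t : ℝ) : ℂ) • S).det).re
      ≤ t * (Real.log ((R + M).det).re - Real.log (R.det).re)
        + (1 - t) * (Real.log ((S + M).det).re - Real.log (S.det).re) := by
  obtain ⟨ht0, ht1⟩ := ht
  have hC : ((t : ℂ) • R + ((1 - t : ℝ) : ℂ) • S).PosDef := posDef_combo hR hS ht0 ht1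
  refine ⟨cpos hR.det_pos, cpos hS.det_pos, cpos (hR.add_posSemidef hM).det_pos,
    cpos (hS.add_posSemidef hM).det_pos, cpos hC.det_pos,
    cpos (hC.add_posSemidef hM).det_pos, ?_⟩
  open scoped MatrixOrder in
  obtain ⟨B, hB⟩ := CStarAlgebra.nonneg_iff_eq_star_mul_self.mp hM.nonneg
  have hdecomp : M = ∑ i : Fin N, vecMulVec (star (B i)) (star (star (B i))) := by
    rw [hB, star_eq_conjTranspose]
    ext j k
    simp [Matrix.mul_apply, Matrix.sum_apply, vecMulVec_apply, conjTranspose_apply]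
  have h := main_ind hR hS ht0 ht1 (fun i => star (B i)) Finset.univ
  rw [← hdecomp] at h
  exact h
end
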